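/- arXiv:0908.0356 — 6 statements merged into one kernel-verified Lean document; each statement's English description precedes it below -/
import Mathlib

section
/- Let ν be a Lévy measure on ℝ and let β > 0, γ > 0, t > 0. Then ∫_0^t ( ∫_ℝ min( 1, (β e^{−γ s} y)² ) ν(dy) ) ds = (1/γ) ∫_{1/β}^{e^{γ t}/β} ( ψ₀(u)/u³ + ψ₁(u)/u ) du, where ψ₀(u) = ∫_{{|y| ≤ u}} y² ν(dy) and ψ₁(u) = ν({y : |y| > u}). -/
open MeasureTheory

-- 1D lintegral change of variables
lemma aux_cov {s : Set ℝ} {f f' : ℝ → ℝ}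
    (hs : MeasurableSet s) (hf' : ∀ x ∈ s, HasDerivWithinAt f (f' x) s x)
    (hf : Set.InjOn f s) (g : ℝ → ENNReal) :
    ∫⁻ x in f '' s, g x = ∫⁻ x in s, ENNReal.ofReal |f' x| * g (f x) := by
  simpa only [ContinuousLinearMap.det_toSpanSingleton] using
    lintegral_image_eq_lintegral_abs_det_fderiv_mul volume hs
      (fun x hx => (hf' x hx).hasFDerivWithinAt) hf g

-- splitting lemma
lemma aux_split (ν : Measure ℝ) {u : ℝ} (hu : 0 < u) :
    ∫⁻ y : ℝ, ENNReal.ofReal (min 1 ((y / u) ^ 2)) ∂ν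
      = (∫⁻ y in {y : ℝ | |y| ≤ u}, ENNReal.ofReal (y ^ 2) ∂ν) / ENNReal.ofReal (u ^ 2)
        + ν {y : ℝ | u < |y|} := by
  have hmeas : MeasurableSet {y : ℝ | |y| ≤ u} := by
    have : {y : ℝ | |y| ≤ u} = Set.Icc (-u) u := by ext y; simp [abs_le]
    rw [this]; exact measurableSet_Icc
  rw [← lintegral_add_compl _ hmeas]
  have hcompl : {y : ℝ | |y| ≤ u}ᶜ = {y : ℝ | u < |y|} := by ext y; simp [not_le]
  congr 1
  · -- on |y| ≤ u
    rw [setLIntegral_congr_fun hmeas (f := fun y => ENNReal.ofReal (min 1 ((y/u)^2)))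
      (g := fun y => ENNReal.ofReal (y ^ 2) / ENNReal.ofReal (u ^ 2)) ?_]
    · simp_rw [div_eq_mul_inv]
      exact lintegral_mul_const' _ _ (by simp [pow_pos hu, hu.ne'])
    · intro y hy
      simp only [Set.mem_setOf_eq] at hy; beta_reduce
      have h1 : (y / u) ^ 2 ≤ 1 := by
        rw [abs_le] at hy
        have : |y / u| ≤ 1 := by
          rw [abs_div, abs_of_pos hu, div_le_one hu]; exact abs_le.2 hy
        calc (y/u)^2 = |y/u|^2 := (sq_abs _).symm
          _ ≤ 1 ^ 2 := by gcongr
          _ = 1 := one_pow 2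
      rw [min_eq_right h1, div_pow, ENNReal.ofReal_div_of_pos (by positivity)]
  · rw [hcompl]
    rw [setLIntegral_congr_fun (by rw [← hcompl]; exact hmeas.compl)
      (f := fun y => ENNReal.ofReal (min 1 ((y/u)^2))) (g := fun _ => 1) ?_]
    · simp
    · intro y hy
      simp only [Set.mem_setOf_eq] at hy; beta_reduce
      have h1 : (1:ℝ) ≤ (y / u) ^ 2 := by
        have : 1 < |y / u| := by
          rw [abs_div, abs_of_pos hu, lt_div_iff₀ hu, one_mul]; exact hy
        calc (1:ℝ) = 1^2 := (one_pow 2).symm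
          _ ≤ |y/u|^2 := by gcongr
          _ = (y/u)^2 := sq_abs _
      rw [min_eq_left h1, ENNReal.ofReal_one]

lemma aux_divdiv (A : ENNReal) {b c : ENNReal} (hb : b ≠ 0) (hb' : b ≠ ⊤) :
    A / (b * c) = A / b / c := by
  rw [div_eq_mul_inv, div_eq_mul_inv, div_eq_mul_inv,
    ENNReal.mul_inv (Or.inl hb) (Or.inl hb'), mul_assoc]


/-- The change-of-variables identity
`∫_0^t ∫_ℝ min(1, (β e^{−γs} y)²) dν ds = (1/γ) ∫_{1/β}^{e^{γt}/β} (ψ₀(u)/u³ + ψ₁(u)/u) du`. -/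
theorem integral_min_one_sq_eq
    (ν : Measure ℝ) [SigmaFinite ν]
    (hν0 : ν {0} = 0)
    (hνI : ∫⁻ y : ℝ, ENNReal.ofReal (min 1 (y ^ 2)) ∂ν ≠ ⊤)
    (β γ t : ℝ) (hβ : 0 < β) (hγ : 0 < γ) (ht : 0 < t) :
    ∫⁻ s in Set.Ioc (0 : ℝ) t,
        (∫⁻ y : ℝ, ENNReal.ofReal (min 1 ((β * Real.exp (-γ * s) * y) ^ 2)) ∂ν)
      = ENNReal.ofReal (1 / γ)
          * ∫⁻ u in Set.Ioc (1 / β) (Real.exp (γ * t) / β),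
              ((∫⁻ y in {y : ℝ | |y| ≤ u}, ENNReal.ofReal (y ^ 2) ∂ν)
                  / ENNReal.ofReal (u ^ 3)
                + ν {y : ℝ | u < |y|} / ENNReal.ofReal u) := by
  have hmono : StrictMono (fun s : ℝ => Real.exp (γ * s) / β) := by
    intro a b hab
    exact (div_lt_div_iff_of_pos_right hβ).2 (Real.exp_lt_exp.2 (by nlinarith))
  have himg : (fun s : ℝ => Real.exp (γ * s) / β) '' Set.Ioc 0 t
      = Set.Ioc (1 / β) (Real.exp (γ * t) / β) := by
    ext u
    constructor
    · rintro ⟨s, ⟨hs0, hst⟩, rfl⟩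
      refine ⟨?_, ?_⟩
      · have h1 : (1:ℝ) < Real.exp (γ * s) := by
          rw [← Real.exp_zero]; exact Real.exp_lt_exp.2 (by nlinarith)
        exact (div_lt_div_iff_of_pos_right hβ).2 h1
      · have h1 : Real.exp (γ * s) ≤ Real.exp (γ * t) := Real.exp_le_exp.2 (by nlinarith)
        exact (div_le_div_iff_of_pos_right hβ).2 h1
    · rintro ⟨h1, h2⟩
      have hβu : (1:ℝ) < u * β := by
        rwa [← div_lt_iff₀ hβ]
      have hβu0 : (0:ℝ) < u * β := lt_trans one_pos hβu
      refine ⟨Real.log (u * β) / γ, ⟨?_, ?_⟩, ?_⟩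
      · exact div_pos (Real.log_pos hβu) hγ
      · rw [div_le_iff₀ hγ]
        have : u * β ≤ Real.exp (γ * t) := by
          rwa [← le_div_iff₀ hβ]
        calc Real.log (u * β) ≤ Real.log (Real.exp (γ * t)) :=
              Real.log_le_log hβu0 this
          _ = γ * t := Real.log_exp _
          _ = t * γ := mul_comm _ _
      · simp only
        rw [mul_div_cancel₀ _ (ne_of_gt hγ), Real.exp_log hβu0,
          mul_div_cancel_right₀ _ (ne_of_gt hβ)]
  have hderiv : ∀ s ∈ Set.Ioc (0:ℝ) t,
      HasDerivWithinAt (fun s : ℝ => Real.exp (γ * s) / β)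
        (Real.exp (γ * s) * γ / β) (Set.Ioc 0 t) s := by
    intro s _
    have h1 : HasDerivAt (fun x : ℝ => γ * x) (γ * 1) s := (hasDerivAt_id s).const_mul γ
    have h2 := (h1.exp).div_const β
    simpa using h2.hasDerivWithinAt
  rw [← himg, aux_cov measurableSet_Ioc hderiv hmono.injective.injOn _,
    ← lintegral_const_mul' _ _ ENNReal.ofReal_ne_top]
  refine setLIntegral_congr_fun measurableSet_Ioc ?_
  intro s hs
  beta_reduce
  obtain ⟨hs0, hst⟩ := hs
  set u : ℝ := Real.exp (γ * s) / β with hu_def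
  have hu : 0 < u := by positivity
  have hrw : (fun y : ℝ => ENNReal.ofReal (min 1 ((β * Real.exp (-γ * s) * y) ^ 2)))
      = fun y : ℝ => ENNReal.ofReal (min 1 ((y / u) ^ 2)) := by
    funext y
    congr 2
    rw [hu_def, neg_mul, Real.exp_neg]
    field_simp
  rw [hrw, aux_split ν hu]
  -- now reduce the constants
  have habs : |Real.exp (γ * s) * γ / β| = Real.exp (γ * s) * γ / β := abs_of_pos (by positivity)
  have hconst : ENNReal.ofReal (1 / γ) * ENNReal.ofReal (Real.exp (γ * s) * γ / β)
      = ENNReal.ofReal u := by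
    rw [← ENNReal.ofReal_mul (by positivity)]
    congr 1
    rw [hu_def]
    field_simp
  have hc1 : ENNReal.ofReal u ≠ 0 := by simp [hu]
  have hc1' : ENNReal.ofReal u ≠ ⊤ := ENNReal.ofReal_ne_top
  have hc2 : ENNReal.ofReal (u ^ 2) ≠ 0 := by simp [pow_pos hu, hu.ne']
  have hc2' : ENNReal.ofReal (u ^ 2) ≠ ⊤ := ENNReal.ofReal_ne_top
  have h3 : ENNReal.ofReal (u ^ 3) = ENNReal.ofReal (u ^ 2) * ENNReal.ofReal u := by
    rw [← ENNReal.ofReal_mul (by positivity), ← pow_succ]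
  rw [habs, ← mul_assoc, hconst, h3, aux_divdiv _ hc2 hc2',
    ENNReal.div_add_div_same, ENNReal.mul_div_cancel hc1 hc1']
end

section
/- Let ν be a Lévy measure on ℝ and let (β_n)_{n≥1}, (γ_n)_{n≥1} be positive real numbers. If there exists t₀ > 0 such that ∑_{n≥1} (1/γ_n) ∫_{1/β_n}^{e^{γ_n t₀}/β_n} ( ψ₀(u)/u³ + ψ₁(u)/u ) du < ∞, then for every t > 0 one has ∑_{n≥1} (1/γ_n) ∫_{1/β_n}^{e^{γ_n t}/β_n} ( ψ₀(u)/u³ + ψ₁(u)/u ) du < ∞, where ψ₀(u) = ∫_{{|y| ≤ u}} y² ν(dy) and ψ₁(u) = ν({y : |y| > u}). -/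
open MeasureTheory

section Aux

variable (ν : Measure ℝ)

noncomputable def psi0 (u : ℝ) : ENNReal := ∫⁻ y in {y : ℝ | |y| ≤ u}, ENNReal.ofReal (y ^ 2) ∂ν
noncomputable def psi1 (u : ℝ) : ENNReal := ν {y : ℝ | u < |y|}
noncomputable def Fν (u : ℝ) : ENNReal := psi0 ν u / ENNReal.ofReal (u ^ 3) + psi1 ν u / ENNReal.ofReal u

lemma psi0_mono : Monotone (psi0 ν) := by
  intro u v huv
  exact lintegral_mono' (Measure.restrict_mono (fun y hy => le_trans hy huv) le_rfl) le_rfl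

lemma psi1_anti : Antitone (psi1 ν) := by
  intro u v huv
  exact measure_mono (fun y hy => lt_of_le_of_lt huv hy)

lemma Fν_measurable : Measurable (Fν ν) := by
  apply Measurable.add
  · exact ((psi0_mono ν).measurable).div (ENNReal.measurable_ofReal.comp (measurable_id.pow_const 3))
  · exact ((psi1_anti ν).measurable).div (ENNReal.measurable_ofReal.comp measurable_id)

lemma min_repr {w : ℝ} (hw : 0 < w) :
    ∫⁻ y, min (ENNReal.ofReal (y ^ 2 / w ^ 2)) 1 ∂ν
      = psi0 ν w / ENNReal.ofReal (w ^ 2) + psi1 ν w := by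
  have hs : MeasurableSet {y : ℝ | |y| ≤ w} := by
    have : {y : ℝ | |y| ≤ w} = (fun y : ℝ => |y|) ⁻¹' (Set.Iic w) := rfl
    rw [this]; exact measurable_abs measurableSet_Iic
  rw [← lintegral_add_compl _ hs]
  have h1 : ∫⁻ y in {y : ℝ | |y| ≤ w}, min (ENNReal.ofReal (y ^ 2 / w ^ 2)) 1 ∂ν
      = psi0 ν w / ENNReal.ofReal (w ^ 2) := by
    have : ∫⁻ y in {y : ℝ | |y| ≤ w}, min (ENNReal.ofReal (y ^ 2 / w ^ 2)) 1 ∂ν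
        = ∫⁻ y in {y : ℝ | |y| ≤ w}, ENNReal.ofReal (y ^ 2) * (ENNReal.ofReal (w ^ 2))⁻¹ ∂ν := by
      apply setLIntegral_congr_fun hs
      intro y hy; beta_reduce
      have hy2 : y ^ 2 ≤ w ^ 2 := by
        have := sq_abs y ▸ pow_le_pow_left₀ (abs_nonneg y) hy 2
        simpa [sq_abs] using this
      have hmin : min (ENNReal.ofReal (y ^ 2 / w ^ 2)) 1 = ENNReal.ofReal (y ^ 2 / w ^ 2) := by
        apply min_eq_left
        rw [← ENNReal.ofReal_one]
        exact ENNReal.ofReal_le_ofReal (div_le_one (pow_pos hw 2) |>.mpr hy2)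
      rw [hmin, div_eq_mul_inv, ENNReal.ofReal_mul (sq_nonneg y),
        ENNReal.ofReal_inv_of_pos (pow_pos hw 2)]
    rw [this, lintegral_mul_const' _ _ (by simp [pow_pos hw 2, hw.ne']), div_eq_mul_inv]
    rfl
  have h2 : ∫⁻ y in {y : ℝ | |y| ≤ w}ᶜ, min (ENNReal.ofReal (y ^ 2 / w ^ 2)) 1 ∂ν = psi1 ν w := by
    have hc : {y : ℝ | |y| ≤ w}ᶜ = {y : ℝ | w < |y|} := by ext y; simp [not_le]
    rw [hc]
    have : ∫⁻ y in {y : ℝ | w < |y|}, min (ENNReal.ofReal (y ^ 2 / w ^ 2)) 1 ∂ν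
        = ∫⁻ _ in {y : ℝ | w < |y|}, (1 : ENNReal) ∂ν := by
      apply setLIntegral_congr_fun (by
        have : {y : ℝ | w < |y|} = (fun y : ℝ => |y|) ⁻¹' (Set.Ioi w) := rfl
        rw [this]; exact measurable_abs measurableSet_Ioi)
      intro y hy
      apply min_eq_right
      rw [← ENNReal.ofReal_one]
      apply ENNReal.ofReal_le_ofReal
      rw [le_div_iff₀ (by positivity), one_mul]
      have : w ^ 2 ≤ |y| ^ 2 := pow_le_pow_left₀ (le_of_lt hw) hy.le 2
      simpa [sq_abs] using this
    rw [this, setLIntegral_one]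
    rfl
  rw [h1, h2]

lemma key_mono {u v : ℝ} (hu : 0 < u) (huv : u ≤ v) :
    psi0 ν v / ENNReal.ofReal (v ^ 2) + psi1 ν v
      ≤ psi0 ν u / ENNReal.ofReal (u ^ 2) + psi1 ν u := by
  rw [← min_repr ν hu, ← min_repr ν (lt_of_lt_of_le hu huv)]
  apply lintegral_mono
  intro y
  apply min_le_min _ le_rfl
  apply ENNReal.ofReal_le_ofReal
  apply div_le_div_of_nonneg_left (by positivity) (by positivity)
  exact pow_le_pow_left₀ hu.le huv 2

lemma Fmul {w : ℝ} (hw : 0 < w) :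
    Fν ν w * ENNReal.ofReal w = psi0 ν w / ENNReal.ofReal (w ^ 2) + psi1 ν w := by
  unfold Fν
  rw [add_mul]
  congr 1
  · have h3 : ENNReal.ofReal (w ^ 3) = ENNReal.ofReal (w ^ 2) * ENNReal.ofReal w := by
      rw [← ENNReal.ofReal_mul (by positivity)]
      ring_nf
    have h0 : ENNReal.ofReal w ≠ 0 := by simp [hw]
    have ht : ENNReal.ofReal w ≠ ⊤ := by simp
    rw [h3, div_eq_mul_inv, ENNReal.mul_inv (Or.inr ht) (Or.inl (by simp)), mul_assoc, mul_assoc,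
      ENNReal.inv_mul_cancel h0 ht, mul_one, ← div_eq_mul_inv]
  · exact ENNReal.div_mul_cancel (by simp [hw]) (by simp)

end Aux

section Aux2

variable (ν : Measure ℝ)

lemma key_scale {c u : ℝ} (hc : 1 ≤ c) (hu : 0 < u) :
    Fν ν (c * u) * ENNReal.ofReal c ≤ Fν ν u := by
  have hcu : 0 < c * u := mul_pos (lt_of_lt_of_le one_pos hc) hu
  have h := key_mono ν hu (le_mul_of_one_le_left hu.le hc)
  rw [← Fmul ν hcu, ← Fmul ν hu, ENNReal.ofReal_mul (by linarith), ← mul_assoc] at h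
  exact (ENNReal.mul_le_mul_iff_left (by simp [hu]) (by simp)).mp h

lemma scale_integral {c a : ℝ} (hc : 1 ≤ c) (ha : 0 < a) (b : ℝ) :
    ∫⁻ u in Set.Ioc (c * a) (c * b), Fν ν u ≤ ∫⁻ u in Set.Ioc a b, Fν ν u := by
  have hc0 : 0 < c := lt_of_lt_of_le one_pos hc
  have hpre : (fun x : ℝ => c * x) ⁻¹' Set.Ioc (c * a) (c * b) = Set.Ioc a b := by
    ext x
    simp only [Set.mem_preimage, Set.mem_Ioc]
    constructor
    · rintro ⟨h1, h2⟩
      exact ⟨(mul_lt_mul_iff_right₀ hc0).mp h1, (mul_le_mul_iff_right₀ hc0).mp h2⟩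
    · rintro ⟨h1, h2⟩
      exact ⟨(mul_lt_mul_iff_right₀ hc0).mpr h1, (mul_le_mul_iff_right₀ hc0).mpr h2⟩
  have hmap : ∫⁻ x in Set.Ioc a b, Fν ν (c * x)
      = ENNReal.ofReal c⁻¹ * ∫⁻ u in Set.Ioc (c * a) (c * b), Fν ν u := by
    rw [← hpre, ← setLIntegral_map measurableSet_Ioc (Fν_measurable ν) (measurable_const_mul c),
      Real.map_volume_mul_left (ne_of_gt hc0), Measure.restrict_smul, lintegral_smul_measure,
      abs_of_pos (inv_pos.mpr hc0), smul_eq_mul]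
  have hints : ∫⁻ u in Set.Ioc (c * a) (c * b), Fν ν u
      = ENNReal.ofReal c * ∫⁻ x in Set.Ioc a b, Fν ν (c * x) := by
    rw [hmap, ← mul_assoc, ← ENNReal.ofReal_mul hc0.le, mul_inv_cancel₀ (ne_of_gt hc0),
      ENNReal.ofReal_one, one_mul]
  rw [hints, ← lintegral_const_mul (ENNReal.ofReal c)
    (show Measurable fun x => Fν ν (c * x) from (Fν_measurable ν).comp (measurable_const_mul c))]
  apply setLIntegral_mono (Fν_measurable ν)
  intro x hx
  rw [mul_comm]
  exact key_scale ν hc (lt_trans ha hx.1)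

lemma iter_integral {a T : ℝ} (ha : 0 < a) (hT : 1 ≤ T) (k : ℕ) :
    ∫⁻ u in Set.Ioc a (T ^ k * a), Fν ν u ≤ k * ∫⁻ u in Set.Ioc a (T * a), Fν ν u := by
  induction k with
  | zero => simp
  | succ k ih =>
    have hTk : (1 : ℝ) ≤ T ^ k := by exact one_le_pow₀ hT
    have h1 : a ≤ T ^ k * a := le_mul_of_one_le_left ha.le hTk
    have h2 : T ^ k * a ≤ T ^ (k + 1) * a := by
      apply mul_le_mul_of_nonneg_right _ ha.le
      exact pow_le_pow_right₀ (by linarith) (Nat.le_succ k)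
    rw [← Set.Ioc_union_Ioc_eq_Ioc h1 h2]
    refine le_trans (lintegral_union_le _ _ _) ?_
    have h3 : ∫⁻ u in Set.Ioc (T ^ k * a) (T ^ (k + 1) * a), Fν ν u
        ≤ ∫⁻ u in Set.Ioc a (T * a), Fν ν u := by
      have he : T ^ (k + 1) * a = T ^ k * (T * a) := by ring
      rw [he]
      exact scale_integral ν hTk ha (T * a)
    calc _ ≤ (k : ENNReal) * (∫⁻ u in Set.Ioc a (T * a), Fν ν u)
            + ∫⁻ u in Set.Ioc a (T * a), Fν ν u := add_le_add ih h3
      _ = _ := by push_cast; ring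

end Aux2


/-- If the series `∑ (1/γ_n) ∫_{1/β_n}^{e^{γ_n t₀}/β_n} (ψ₀(u)/u³ + ψ₁(u)/u) du` is finite
for some `t₀ > 0`, then it is finite for every `t > 0`. -/
theorem sum_finite_for_all_t_of_finite_for_some_t
    (ν : Measure ℝ) [SigmaFinite ν]
    (hν0 : ν {0} = 0)
    (hνI : ∫⁻ y : ℝ, ENNReal.ofReal (min 1 (y ^ 2)) ∂ν ≠ ⊤)
    (β γ : ℕ → ℝ) (hβ : ∀ n, 0 < β n) (hγ : ∀ n, 0 < γ n)
    (h : ∃ t₀ > (0 : ℝ),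
      (∑' n, ENNReal.ofReal (1 / γ n)
          * ∫⁻ u in Set.Ioc (1 / β n) (Real.exp (γ n * t₀) / β n),
              ((∫⁻ y in {y : ℝ | |y| ≤ u}, ENNReal.ofReal (y ^ 2) ∂ν)
                  / ENNReal.ofReal (u ^ 3)
                + ν {y : ℝ | u < |y|} / ENNReal.ofReal u)) ≠ ⊤) :
    ∀ t > (0 : ℝ),
      (∑' n, ENNReal.ofReal (1 / γ n)
          * ∫⁻ u in Set.Ioc (1 / β n) (Real.exp (γ n * t) / β n),
              ((∫⁻ y in {y : ℝ | |y| ≤ u}, ENNReal.ofReal (y ^ 2) ∂ν)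
                  / ENNReal.ofReal (u ^ 3)
                + ν {y : ℝ | u < |y|} / ENNReal.ofReal u)) ≠ ⊤ := by
  obtain ⟨t₀, ht₀, hsum⟩ := h
  intro t ht
  obtain ⟨k, hk⟩ := exists_nat_ge (t / t₀)
  have hkt : t ≤ k * t₀ := by
    rw [div_le_iff₀ ht₀] at hk; linarith
  have key : ∀ n, ENNReal.ofReal (1 / γ n)
        * (∫⁻ u in Set.Ioc (1 / β n) (Real.exp (γ n * t) / β n), Fν ν u)
      ≤ (k : ENNReal) * (ENNReal.ofReal (1 / γ n)
        * ∫⁻ u in Set.Ioc (1 / β n) (Real.exp (γ n * t₀) / β n), Fν ν u) := by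
    intro n
    have ha : 0 < 1 / β n := one_div_pos.mpr (hβ n)
    set a := 1 / β n with hadef
    set T := Real.exp (γ n * t₀) with hTdef
    have hT : 1 ≤ T := Real.one_le_exp (mul_pos (hγ n) ht₀).le
    have hsub : Set.Ioc a (Real.exp (γ n * t) / β n) ⊆ Set.Ioc a (T ^ k * a) := by
      apply Set.Ioc_subset_Ioc_right
      have hle : Real.exp (γ n * t) ≤ T ^ k := by
        rw [hTdef, ← Real.exp_nat_mul]
        apply Real.exp_le_exp.mpr
        calc γ n * t ≤ γ n * (k * t₀) := mul_le_mul_of_nonneg_left hkt (hγ n).le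
          _ = k * (γ n * t₀) := by ring
      calc Real.exp (γ n * t) / β n = Real.exp (γ n * t) * a := by
            rw [hadef, div_eq_mul_one_div]
        _ ≤ T ^ k * a := mul_le_mul_of_nonneg_right hle ha.le
    have hTa : T * a = T / β n := by rw [hadef, mul_one_div]
    calc ENNReal.ofReal (1 / γ n)
          * (∫⁻ u in Set.Ioc a (Real.exp (γ n * t) / β n), Fν ν u)
        ≤ ENNReal.ofReal (1 / γ n) * ∫⁻ u in Set.Ioc a (T ^ k * a), Fν ν u :=
          mul_le_mul_right (lintegral_mono_set hsub) _
      _ ≤ ENNReal.ofReal (1 / γ n)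
            * ((k : ENNReal) * ∫⁻ u in Set.Ioc a (T * a), Fν ν u) :=
          mul_le_mul_right (iter_integral ν ha hT k) _
      _ = (k : ENNReal) * (ENNReal.ofReal (1 / γ n)
            * ∫⁻ u in Set.Ioc a (T / β n), Fν ν u) := by rw [hTa]; ring
  have hle := ENNReal.tsum_le_tsum key
  rw [ENNReal.tsum_mul_left] at hle
  exact ne_top_of_le_ne_top (ENNReal.mul_ne_top (by simp) hsum) hle
end

section
/- Let ν be a Lévy measure on ℝ and let b ≥ 1. Then ∫_1^b ψ₀(u)/u³ du = (1/2) ( ν({y : 1 < |y| ≤ b}) + ∫_{{|y| ≤ 1}} y² ν(dy) − (1/b²) ∫_{{|y| ≤ b}} y² ν(dy) ), where ψ₀(u) = ∫_{{|y| ≤ u}} y² ν(dy). -/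
open MeasureTheory
open scoped ENNReal

set_option maxHeartbeats 1000000 in
lemma aux_inv_cube_integral {a b : ℝ} (ha : 0 < a) (hab : a ≤ b) :
    ∫ u in Set.Ioc a b, (u ^ 3)⁻¹ = ((a ^ 2)⁻¹ - (b ^ 2)⁻¹) / 2 := by
  rw [← intervalIntegral.integral_of_le hab]
  have h0 : (0 : ℝ) ∉ Set.uIcc a b := by
    rw [Set.uIcc_of_le hab]
    rintro ⟨h1, -⟩
    linarith
  have h := integral_zpow (a := a) (b := b) (n := -3)
    (Or.inr ⟨by norm_num, h0⟩)
  have ha' : a ≠ 0 := ne_of_gt ha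
  have hb' : b ≠ 0 := ne_of_gt (ha.trans_le hab)
  rw [show ∫ x in a..b, (x ^ 3)⁻¹ = ∫ x in a..b, x ^ (-3 : ℤ) by
      refine intervalIntegral.integral_congr fun x hx => ?_
      rw [show (-3 : ℤ) = -(3 : ℕ) by norm_num, zpow_neg, zpow_natCast]]
  rw [h]
  rw [show ((-3 : ℤ) + 1) = -(2 : ℕ) by norm_num, zpow_neg, zpow_natCast, zpow_neg, zpow_natCast]
  push_cast
  ring

lemma aux_intOn {a b c : ℝ} (ha : 0 < a) :
    MeasureTheory.IntegrableOn (fun u : ℝ => c / u ^ 3) (Set.Ioc a b) := by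
  apply (ContinuousOn.integrableOn_Icc ?_).mono_set Set.Ioc_subset_Icc_self
  exact continuousOn_const.div (by fun_prop)
    (fun x hx => pow_ne_zero _ (ne_of_gt (lt_of_lt_of_le ha hx.1)))

lemma aux_lint {a b c : ℝ} (ha : 0 < a) (hab : a ≤ b) (hc : 0 ≤ c) :
    ∫⁻ u in Set.Ioc a b, ENNReal.ofReal (c / u ^ 3)
      = ENNReal.ofReal (c * ((a ^ 2)⁻¹ - (b ^ 2)⁻¹) / 2) := by
  rw [← ofReal_integral_eq_lintegral_ofReal (aux_intOn ha) ?_]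
  · congr 1
    simp only [div_eq_mul_inv c]
    rw [integral_const_mul, aux_inv_cube_integral ha hab]
    ring
  · refine (ae_restrict_iff' measurableSet_Ioc).2 (Filter.Eventually.of_forall fun u hu => ?_)
    have hu0 : 0 < u := ha.trans hu.1
    positivity

set_option maxHeartbeats 1000000 in
/-- `∫_1^b ψ₀(u)/u³ du = (1/2)(ν{1<|y|≤b} + ∫_{|y|≤1} y² dν − (1/b²) ∫_{|y|≤b} y² dν)`. -/
theorem integral_small_jumps_div_eq
    (ν : Measure ℝ) [SigmaFinite ν]
    (hν0 : ν {0} = 0)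
    (hνI : ∫⁻ y : ℝ, ENNReal.ofReal (min 1 (y ^ 2)) ∂ν ≠ ⊤)
    (b : ℝ) (hb : 1 ≤ b) :
    ∫ u in Set.Ioc (1 : ℝ) b, (∫ y in {y : ℝ | |y| ≤ u}, y ^ 2 ∂ν) / u ^ 3
      = (1 / 2) * ((ν {y : ℝ | 1 < |y| ∧ |y| ≤ b}).toReal
          + (∫ y in {y : ℝ | |y| ≤ 1}, y ^ 2 ∂ν)
          - (1 / b ^ 2) * ∫ y in {y : ℝ | |y| ≤ b}, y ^ 2 ∂ν) := by
  have hb0 : (0 : ℝ) < b := lt_of_lt_of_le one_pos hb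
  have hb' : b ≠ 0 := ne_of_gt hb0
  have hSmeas : ∀ u : ℝ, MeasurableSet {y : ℝ | |y| ≤ u} :=
    fun u => measurableSet_le measurable_abs measurable_const
  have hTmeas : MeasurableSet {y : ℝ | 1 < |y| ∧ |y| ≤ b} :=
    (measurableSet_lt measurable_const measurable_abs).inter
      (measurableSet_le measurable_abs measurable_const)
  -- finiteness of ∫⁻ y² on {|y| ≤ b}
  have hC : ∫⁻ y in {y : ℝ | |y| ≤ b}, ENNReal.ofReal (y ^ 2) ∂ν ≠ ⊤ := by
    have h1 : ∫⁻ y in {y : ℝ | |y| ≤ b}, ENNReal.ofReal (y ^ 2) ∂ν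
        ≤ ENNReal.ofReal (b ^ 2) * ∫⁻ y, ENNReal.ofReal (min 1 (y ^ 2)) ∂ν := by
      calc ∫⁻ y in {y : ℝ | |y| ≤ b}, ENNReal.ofReal (y ^ 2) ∂ν
          ≤ ∫⁻ y in {y : ℝ | |y| ≤ b},
              ENNReal.ofReal (b ^ 2) * ENNReal.ofReal (min 1 (y ^ 2)) ∂ν := by
            refine setLIntegral_mono' (hSmeas b) fun y hy => ?_
            rw [← ENNReal.ofReal_mul (by positivity)]
            refine ENNReal.ofReal_le_ofReal ?_
            have hyb : |y| ≤ b := hy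
            rcases le_total (y ^ 2) 1 with h | h
            · rw [min_eq_right h]
              have hb2 : (1 : ℝ) ≤ b ^ 2 := one_le_pow₀ hb
              nlinarith [sq_nonneg y]
            · rw [min_eq_left h]; nlinarith [sq_abs y, abs_nonneg y]
        _ = ENNReal.ofReal (b ^ 2) * ∫⁻ y in {y : ℝ | |y| ≤ b},
              ENNReal.ofReal (min 1 (y ^ 2)) ∂ν := lintegral_const_mul _ (by measurability)
        _ ≤ _ := mul_le_mul_right (setLIntegral_le_lintegral _ _) _
    exact ne_top_of_le_ne_top (ENNReal.mul_ne_top ENNReal.ofReal_ne_top hνI) h1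
  have hTfin : ν {y : ℝ | 1 < |y| ∧ |y| ≤ b} ≠ ⊤ := by
    have h1 : ν {y : ℝ | 1 < |y| ∧ |y| ≤ b}
        = ∫⁻ y in {y : ℝ | 1 < |y| ∧ |y| ≤ b}, ENNReal.ofReal (min 1 (y ^ 2)) ∂ν := by
      rw [← setLIntegral_one]
      refine setLIntegral_congr_fun hTmeas (fun y hy => ?_)
      have h2 : (1 : ℝ) ≤ y ^ 2 := by nlinarith [hy.1, abs_nonneg y, sq_abs y]
      rw [min_eq_left h2, ENNReal.ofReal_one]
    rw [h1]
    exact ne_top_of_le_ne_top hνI (setLIntegral_le_lintegral _ _)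
  -- integrability of y² on the relevant sets
  have hIntSb : IntegrableOn (fun y : ℝ => y ^ 2) {y : ℝ | |y| ≤ b} ν := by
    refine ⟨by fun_prop, ?_⟩
    rw [hasFiniteIntegral_iff_ofReal (Filter.Eventually.of_forall fun y => by positivity)]
    exact hC.lt_top
  have hsubS1 : {y : ℝ | |y| ≤ 1} ⊆ {y : ℝ | |y| ≤ b} := fun y hy => le_trans hy hb
  have hsubT : {y : ℝ | 1 < |y| ∧ |y| ≤ b} ⊆ {y : ℝ | |y| ≤ b} := fun y hy => hy.2
  have hIntS1 := hIntSb.mono_set hsubS1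
  have hIntT := hIntSb.mono_set hsubT
  -- splitting of the big ball
  have hsplit : {y : ℝ | |y| ≤ b} = {y : ℝ | |y| ≤ 1} ∪ {y : ℝ | 1 < |y| ∧ |y| ≤ b} := by
    ext y
    simp only [Set.mem_setOf_eq, Set.mem_union]
    constructor
    · intro h
      rcases le_or_gt |y| 1 with h1 | h1
      · exact Or.inl h1
      · exact Or.inr ⟨h1, h⟩
    · rintro (h | h)
      · exact le_trans h hb
      · exact h.2
  have hdisj : Disjoint {y : ℝ | |y| ≤ 1} {y : ℝ | 1 < |y| ∧ |y| ≤ b} := by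
    rw [Set.disjoint_left]
    rintro y hy ⟨h1, -⟩
    exact absurd hy (not_le.mpr h1)
  -- the kernel
  set f : ℝ → ℝ → ℝ≥0∞ := fun u y => if |y| ≤ u then ENNReal.ofReal (y ^ 2 / u ^ 3) else 0
    with hfdef
  have hfmeas : Measurable (Function.uncurry f) := by
    have h1 : Function.uncurry f = fun p : ℝ × ℝ =>
        Set.indicator {p : ℝ × ℝ | |p.2| ≤ p.1}
          (fun p => ENNReal.ofReal (p.2 ^ 2 / p.1 ^ 3)) p := by
      ext p
      simp [Function.uncurry, hfdef, Set.indicator_apply]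
    rw [h1]
    exact Measurable.indicator (by fun_prop)
      (measurableSet_le (by fun_prop) (by fun_prop))
  -- inner integral over y
  have hinner : ∀ u ∈ Set.Ioc (1 : ℝ) b,
      ∫⁻ y, f u y ∂ν = ∫⁻ y in {y : ℝ | |y| ≤ u}, ENNReal.ofReal (y ^ 2 / u ^ 3) ∂ν := by
    intro u hu
    rw [← lintegral_indicator (hSmeas u)]
    refine lintegral_congr fun y => ?_
    simp [hfdef, Set.indicator_apply]
  have hpoint : ∀ u ∈ Set.Ioc (1 : ℝ) b,
      (∫ y in {y : ℝ | |y| ≤ u}, y ^ 2 ∂ν) / u ^ 3 = (∫⁻ y, f u y ∂ν).toReal := by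
    intro u hu
    have hu0 : (0 : ℝ) < u := lt_trans one_pos hu.1
    rw [hinner u hu, ← integral_div]
    exact integral_eq_lintegral_of_nonneg_ae
      (Filter.Eventually.of_forall fun y => by positivity)
      (((measurable_id.pow_const 2).div_const _).aestronglyMeasurable)
  -- LHS as a double lintegral
  have hLHS : ∫ u in Set.Ioc (1 : ℝ) b, (∫ y in {y : ℝ | |y| ≤ u}, y ^ 2 ∂ν) / u ^ 3
      = (∫⁻ u in Set.Ioc (1 : ℝ) b, (∫⁻ y, f u y ∂ν)).toReal := by
    rw [setIntegral_congr_fun measurableSet_Ioc hpoint]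
    refine integral_toReal (hfmeas.lintegral_prod_right.aemeasurable) ?_
    refine (ae_restrict_iff' measurableSet_Ioc).2 (Filter.Eventually.of_forall fun u hu => ?_)
    rw [hinner u hu]
    refine lt_of_le_of_lt (le_trans (setLIntegral_mono' (hSmeas u) fun y hy => ?_)
      (lintegral_mono_set fun y hy => le_trans hy hu.2)) hC.lt_top
    exact ENNReal.ofReal_le_ofReal
      (div_le_self (by positivity) (one_le_pow₀ (le_of_lt hu.1)))
  -- Tonelli
  have hswap : (∫⁻ u in Set.Ioc (1 : ℝ) b, (∫⁻ y, f u y ∂ν))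
      = ∫⁻ y, (∫⁻ u in Set.Ioc (1 : ℝ) b, f u y) ∂ν :=
    lintegral_lintegral_swap hfmeas.aemeasurable
  -- value of the u-integral on {|y| ≤ 1}
  have hS1val : ∀ y ∈ {y : ℝ | |y| ≤ 1},
      (∫⁻ u in Set.Ioc (1 : ℝ) b, f u y)
        = ENNReal.ofReal (y ^ 2 * ((1 - (b ^ 2)⁻¹) / 2)) := by
    intro y hy
    have h1 : (∫⁻ u in Set.Ioc (1 : ℝ) b, f u y)
        = ∫⁻ u in Set.Ioc (1 : ℝ) b, ENNReal.ofReal (y ^ 2 / u ^ 3) := by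
      refine setLIntegral_congr_fun measurableSet_Ioc
        (fun u hu => ?_)
      simp only [hfdef]
      exact if_pos (le_trans hy (le_of_lt hu.1))
    rw [h1, aux_lint one_pos hb (sq_nonneg y)]
    congr 1
    norm_num
    ring
  -- value of the u-integral on {1 < |y| ≤ b}
  have hTval : ∀ y ∈ {y : ℝ | 1 < |y| ∧ |y| ≤ b},
      (∫⁻ u in Set.Ioc (1 : ℝ) b, f u y)
        = ENNReal.ofReal ((1 - y ^ 2 / b ^ 2) / 2) := by
    intro y hy
    have hy1 : 1 < |y| := hy.1
    have hyb : |y| ≤ b := hy.2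
    have hy0 : (0 : ℝ) < |y| := lt_trans one_pos hy1
    have hyne : y ≠ 0 := abs_pos.mp hy0
    have h1 : (fun u => f u y) = Set.indicator (Set.Ici |y|)
        (fun u => ENNReal.ofReal (y ^ 2 / u ^ 3)) := by
      funext u
      simp [hfdef, Set.indicator_apply]
    have h2 : (∫⁻ u in Set.Ioc (1 : ℝ) b, f u y)
        = ∫⁻ u in Set.Ici |y| ∩ Set.Ioc 1 b, ENNReal.ofReal (y ^ 2 / u ^ 3) := by
      rw [show (∫⁻ u in Set.Ioc (1 : ℝ) b, f u y)
          = ∫⁻ u in Set.Ioc (1 : ℝ) b, Set.indicator (Set.Ici |y|)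
              (fun u => ENNReal.ofReal (y ^ 2 / u ^ 3)) u by rw [← h1]]
      rw [lintegral_indicator measurableSet_Ici, Measure.restrict_restrict measurableSet_Ici]
    have h3 : Set.Ici |y| ∩ Set.Ioc 1 b = Set.Icc |y| b := by
      ext u
      simp only [Set.mem_inter_iff, Set.mem_Ici, Set.mem_Ioc, Set.mem_Icc]
      constructor
      · rintro ⟨h4, -, h5⟩; exact ⟨h4, h5⟩
      · rintro ⟨h4, h5⟩; exact ⟨h4, lt_of_lt_of_le hy1 h4, h5⟩
    have h4 : (∫⁻ u in Set.Icc |y| b, ENNReal.ofReal (y ^ 2 / u ^ 3))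
        = ∫⁻ u in Set.Ioc |y| b, ENNReal.ofReal (y ^ 2 / u ^ 3) := by
      rw [Measure.restrict_congr_set Ioc_ae_eq_Icc.symm]
    rw [h2, h3, h4, aux_lint hy0 hyb (sq_nonneg y)]
    congr 1
    rw [sq_abs]
    have hy2 : y ^ 2 ≠ 0 := pow_ne_zero _ hyne
    field_simp
  -- the u-integral vanishes for |y| > b
  have hZval : ∀ y : ℝ, b < |y| → (∫⁻ u in Set.Ioc (1 : ℝ) b, f u y) = 0 := by
    intro y hy
    rw [setLIntegral_congr_fun measurableSet_Ioc
      (fun u hu => ?_), lintegral_zero]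
    show f u y = 0
    simp only [hfdef]
    exact if_neg (not_le.mpr (lt_of_le_of_lt hu.2 hy))
  -- split the outer integral
  have houter : (∫⁻ y, (∫⁻ u in Set.Ioc (1 : ℝ) b, f u y) ∂ν)
      = (∫⁻ y in {y : ℝ | |y| ≤ 1}, (∫⁻ u in Set.Ioc (1 : ℝ) b, f u y) ∂ν)
        + ∫⁻ y in {y : ℝ | 1 < |y| ∧ |y| ≤ b}, (∫⁻ u in Set.Ioc (1 : ℝ) b, f u y) ∂ν := by
    rw [← lintegral_union hTmeas hdisj, ← hsplit, ← lintegral_indicator (hSmeas b)]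
    refine lintegral_congr fun y => ?_
    rw [Set.indicator_apply]
    split_ifs with hy
    · rfl
    · exact hZval y (not_le.mp hy)
  -- first piece
  have hbinv : (b ^ 2)⁻¹ ≤ 1 := by
    rw [inv_le_one₀ (by positivity)]
    nlinarith
  have hS1piece : (∫⁻ y in {y : ℝ | |y| ≤ 1}, (∫⁻ u in Set.Ioc (1 : ℝ) b, f u y) ∂ν)
      = ENNReal.ofReal ((∫ y in {y : ℝ | |y| ≤ 1}, y ^ 2 ∂ν) * ((1 - (b ^ 2)⁻¹) / 2)) := by
    rw [setLIntegral_congr_fun (hSmeas 1) hS1val,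
      ← integral_mul_const]
    exact (ofReal_integral_eq_lintegral_ofReal (hIntS1.mul_const _)
      (Filter.Eventually.of_forall fun y =>
        mul_nonneg (sq_nonneg y) (by linarith))).symm
  -- second piece
  haveI : IsFiniteMeasure (ν.restrict {y : ℝ | 1 < |y| ∧ |y| ≤ b}) :=
    ⟨by rw [Measure.restrict_apply_univ]; exact hTfin.lt_top⟩
  have hTpiece : (∫⁻ y in {y : ℝ | 1 < |y| ∧ |y| ≤ b}, (∫⁻ u in Set.Ioc (1 : ℝ) b, f u y) ∂ν)
      = ENNReal.ofReal (∫ y in {y : ℝ | 1 < |y| ∧ |y| ≤ b}, (1 - y ^ 2 / b ^ 2) / 2 ∂ν) := by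
    rw [setLIntegral_congr_fun hTmeas hTval]
    refine (ofReal_integral_eq_lintegral_ofReal
      (((integrable_const 1).sub (hIntT.div_const _)).div_const _)
      ((ae_restrict_iff' hTmeas).2 (Filter.Eventually.of_forall fun y hy => ?_))).symm
    have hyb : |y| ≤ b := hy.2
    have h5 : y ^ 2 ≤ b ^ 2 := by nlinarith [sq_abs y, abs_nonneg y]
    have h6 : y ^ 2 / b ^ 2 ≤ 1 := by
      rw [div_le_one (by positivity)]; exact h5
    show (0 : ℝ) ≤ (1 - y ^ 2 / b ^ 2) / 2
    linarith
  have hTvalue : (∫ y in {y : ℝ | 1 < |y| ∧ |y| ≤ b}, (1 - y ^ 2 / b ^ 2) / 2 ∂ν)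
      = ((ν {y : ℝ | 1 < |y| ∧ |y| ≤ b}).toReal
          - (∫ y in {y : ℝ | 1 < |y| ∧ |y| ≤ b}, y ^ 2 ∂ν) / b ^ 2) / 2 := by
    rw [integral_div, integral_sub (integrable_const 1) (hIntT.div_const _), integral_div,
      integral_const]
    simp [Measure.restrict_apply_univ, measureReal_def]
  have hTnonneg : 0 ≤ ∫ y in {y : ℝ | 1 < |y| ∧ |y| ≤ b}, (1 - y ^ 2 / b ^ 2) / 2 ∂ν := by
    refine setIntegral_nonneg hTmeas fun y hy => ?_
    have hyb : |y| ≤ b := hy.2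
    have h5 : y ^ 2 ≤ b ^ 2 := by nlinarith [sq_abs y, abs_nonneg y]
    have h6 : y ^ 2 / b ^ 2 ≤ 1 := by
      rw [div_le_one (by positivity)]; exact h5
    linarith
  have hS1nonneg : 0 ≤ (∫ y in {y : ℝ | |y| ≤ 1}, y ^ 2 ∂ν) * ((1 - (b ^ 2)⁻¹) / 2) :=
    mul_nonneg (setIntegral_nonneg (hSmeas 1) fun y _ => sq_nonneg y) (by linarith)
  have hsum : (∫ y in {y : ℝ | |y| ≤ b}, y ^ 2 ∂ν)
      = (∫ y in {y : ℝ | |y| ≤ 1}, y ^ 2 ∂ν)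
        + ∫ y in {y : ℝ | 1 < |y| ∧ |y| ≤ b}, y ^ 2 ∂ν := by
    rw [hsplit]
    exact setIntegral_union hdisj hTmeas hIntS1 hIntT
  rw [hLHS, hswap, houter, hS1piece, hTpiece,
    ← ENNReal.ofReal_add hS1nonneg hTnonneg,
    ENNReal.toReal_ofReal (by linarith), hTvalue, hsum]
  field_simp
  ring
end

section
/- Let ν be a Lévy measure on ℝ satisfying the logarithmic moment condition ∫_{{|y| > 1}} log|y| ν(dy) < ∞. Then for every b ≥ 1, ∫_1^b ( ψ₀(u)/u³ + ψ₁(u)/u ) du ≤ 2 ∫_{{|y| > 1}} log|y| ν(dy) + ν({y : |y| > 1}) + ∫_{{|y| ≤ 1}} y² ν(dy); in particular sup_{b ≥ 1} ∫_1^b ( ψ₀(u)/u³ + ψ₁(u)/u ) du < ∞. Here ψ₀(u) = ∫_{{|y| ≤ u}} y² ν(dy) and ψ₁(u) = ν({y : |y| > u}). -/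
open MeasureTheory


lemma aux_cube (m b : ℝ) (hm : 1 ≤ m) :
    ∫⁻ u in Set.Icc m b, (ENNReal.ofReal (u ^ 3))⁻¹ ≤ ENNReal.ofReal (1 / (2 * m ^ 2)) := by
  rcases le_or_gt m b with h | h
  · have h0 : ∀ u ∈ Set.Icc m b, (ENNReal.ofReal (u ^ 3))⁻¹ = ENNReal.ofReal ((u ^ 3)⁻¹) := by
      intro u hu
      rw [ENNReal.ofReal_inv_of_pos]
      have : (1:ℝ) ≤ u := le_trans hm hu.1
      positivity
    rw [setLIntegral_congr_fun measurableSet_Icc h0]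
    have hint : IntegrableOn (fun u : ℝ => (u ^ 3)⁻¹) (Set.Icc m b) := by
      apply ContinuousOn.integrableOn_Icc
      apply ContinuousOn.inv₀ (by fun_prop)
      intro u hu
      have : (1:ℝ) ≤ u := le_trans hm hu.1
      positivity
    rw [← ofReal_integral_eq_lintegral_ofReal hint
      (((ae_restrict_iff' measurableSet_Icc).2 (ae_of_all _ (by
        intro u hu
        have : (1:ℝ) ≤ u := le_trans hm hu.1
        positivity))))]
    apply ENNReal.ofReal_le_ofReal
    have hm0 : (0:ℝ) < m := lt_of_lt_of_le one_pos hm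
    have hb0 : (0:ℝ) < b := lt_of_lt_of_le hm0 h
    have hz : (0:ℝ) ∉ Set.uIcc m b := by
      rw [Set.uIcc_of_le h]
      intro hc
      exact absurd hc.1 (not_le.mpr hm0)
    have h3 : ∫ u in Set.Icc m b, (u ^ 3)⁻¹ = ∫ u in m..b, u ^ (-3 : ℤ) := by
      rw [MeasureTheory.integral_Icc_eq_integral_Ioc, ← intervalIntegral.integral_of_le h]
      apply intervalIntegral.integral_congr
      intro u hu
      simp [zpow_neg]
    rw [h3, integral_zpow (Or.inr ⟨by norm_num, hz⟩)]
    have h1 : b ^ (-3 + 1 : ℤ) = (b ^ 2)⁻¹ := by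
      norm_num [zpow_neg]
    have h2 : m ^ (-3 + 1 : ℤ) = (m ^ 2)⁻¹ := by
      norm_num [zpow_neg]
    rw [h1, h2]
    have hb2 : (0:ℝ) ≤ (b ^ 2)⁻¹ := by positivity
    have e1 : ((b ^ 2)⁻¹ - (m ^ 2)⁻¹) / (((-3 : ℤ) : ℝ) + 1) = ((m ^ 2)⁻¹ - (b ^ 2)⁻¹) / 2 := by
      push_cast; ring
    have e2 : (m ^ 2)⁻¹ / 2 = 1 / (2 * m ^ 2) := by
      field_simp
    rw [e1, ← e2]
    linarith
  · rw [Set.Icc_eq_empty (not_le.mpr h), Measure.restrict_empty, lintegral_zero_measure]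
    exact zero_le

lemma aux_log (m : ℝ) (hm : 1 ≤ m) :
    ∫⁻ u in Set.Icc 1 m, (ENNReal.ofReal u)⁻¹ ≤ ENNReal.ofReal (Real.log m) := by
  have h0 : ∀ u ∈ Set.Icc (1:ℝ) m, (ENNReal.ofReal u)⁻¹ = ENNReal.ofReal u⁻¹ := by
    intro u hu
    rw [ENNReal.ofReal_inv_of_pos (lt_of_lt_of_le one_pos hu.1)]
  rw [setLIntegral_congr_fun measurableSet_Icc h0]
  have hint : IntegrableOn (fun u : ℝ => u⁻¹) (Set.Icc 1 m) := by
    apply ContinuousOn.integrableOn_Icc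
    apply ContinuousOn.inv₀ (by fun_prop)
    intro u hu
    have : (1:ℝ) ≤ u := hu.1
    positivity
  rw [← ofReal_integral_eq_lintegral_ofReal hint
    (((ae_restrict_iff' measurableSet_Icc).2 (ae_of_all _ (by
      intro u hu
      have : (1:ℝ) ≤ u := hu.1
      positivity))))]
  apply ENNReal.ofReal_le_ofReal
  have hz : (0:ℝ) ∉ Set.uIcc 1 m := by
    rw [Set.uIcc_of_le hm]
    intro hc
    exact absurd hc.1 (by norm_num)
  have h3 : ∫ u in Set.Icc (1:ℝ) m, u⁻¹ = ∫ u in (1:ℝ)..m, u⁻¹ := by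
    rw [MeasureTheory.integral_Icc_eq_integral_Ioc, ← intervalIntegral.integral_of_le hm]
  rw [h3, integral_inv hz]
  simp

-- ψ₀ part bound
lemma psi0_bound (ν : Measure ℝ) [SigmaFinite ν] (b : ℝ) (hb : 1 ≤ b) :
    ∫⁻ u in Set.Ioc (1:ℝ) b,
        (∫⁻ y in {y : ℝ | |y| ≤ u}, ENNReal.ofReal (y ^ 2) ∂ν) / ENNReal.ofReal (u ^ 3)
      ≤ ∫⁻ y : ℝ, ENNReal.ofReal (min 1 (y ^ 2)) ∂ν := by
  set F : ℝ × ℝ → ENNReal := fun p =>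
    ({p : ℝ × ℝ | |p.2| ≤ p.1}).indicator
      (fun p => ENNReal.ofReal (p.2 ^ 2) * (ENNReal.ofReal (p.1 ^ 3))⁻¹) p with hF
  have hFmeas : Measurable F := by
    apply Measurable.indicator
    · fun_prop
    · exact measurableSet_le (by fun_prop) (by fun_prop)
  have hSmeas : ∀ u : ℝ, MeasurableSet {y : ℝ | |y| ≤ u} := fun u =>
    measurableSet_le (by fun_prop) (by fun_prop)
  have step1 : ∫⁻ u in Set.Ioc (1:ℝ) b,
      (∫⁻ y in {y : ℝ | |y| ≤ u}, ENNReal.ofReal (y ^ 2) ∂ν) / ENNReal.ofReal (u ^ 3)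
      = ∫⁻ u in Set.Ioc (1:ℝ) b, ∫⁻ y, F (u, y) ∂ν := by
    apply setLIntegral_congr_fun measurableSet_Ioc
    intro u hu
    have hu0 : (0:ℝ) < u := lt_trans one_pos hu.1
    have hc : (ENNReal.ofReal (u ^ 3))⁻¹ ≠ ⊤ := by
      rw [ENNReal.inv_ne_top]
      exact (ENNReal.ofReal_pos.mpr (by positivity)).ne'
    beta_reduce
    rw [div_eq_mul_inv, ← lintegral_mul_const' _ _ hc, ← lintegral_indicator (hSmeas u)]
    apply lintegral_congr
    intro y
    by_cases h : |y| ≤ u <;> simp [hF, Set.indicator, h]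
  rw [step1]
  rw [lintegral_lintegral_swap hFmeas.aemeasurable]
  apply le_trans (lintegral_mono fun y => ?_) (le_refl _)
  -- inner bound per y
  have hIci : MeasurableSet (Set.Ici |y|) := measurableSet_Ici
  have e1 : ∫⁻ u in Set.Ioc (1:ℝ) b, F (u, y)
      = ∫⁻ u in Set.Ici |y| ∩ Set.Ioc 1 b,
          ENNReal.ofReal (y ^ 2) * (ENNReal.ofReal (u ^ 3))⁻¹ := by
    rw [← Measure.restrict_restrict hIci, ← lintegral_indicator hIci]
    apply lintegral_congr
    intro u
    by_cases h : |y| ≤ u <;> simp [hF, Set.indicator, h, Set.mem_Ici]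
  rw [e1]
  have hsub : Set.Ici |y| ∩ Set.Ioc 1 b ⊆ Set.Icc (max 1 |y|) b := by
    rintro u ⟨h1, h2, h3⟩
    exact ⟨max_le h2.le h1, h3⟩
  calc ∫⁻ u in Set.Ici |y| ∩ Set.Ioc 1 b,
          ENNReal.ofReal (y ^ 2) * (ENNReal.ofReal (u ^ 3))⁻¹
      ≤ ∫⁻ u in Set.Icc (max 1 |y|) b,
          ENNReal.ofReal (y ^ 2) * (ENNReal.ofReal (u ^ 3))⁻¹ := lintegral_mono_set hsub
    _ = ENNReal.ofReal (y ^ 2) * ∫⁻ u in Set.Icc (max 1 |y|) b,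
          (ENNReal.ofReal (u ^ 3))⁻¹ := lintegral_const_mul' _ _ ENNReal.ofReal_ne_top
    _ ≤ ENNReal.ofReal (y ^ 2) * ENNReal.ofReal (1 / (2 * (max 1 |y|) ^ 2)) :=
        mul_le_mul_right (aux_cube _ _ (le_max_left _ _)) _
    _ = ENNReal.ofReal (y ^ 2 * (1 / (2 * (max 1 |y|) ^ 2))) :=
        (ENNReal.ofReal_mul (sq_nonneg y)).symm
    _ ≤ ENNReal.ofReal (min 1 (y ^ 2)) := by
        apply ENNReal.ofReal_le_ofReal
        rcases le_total (|y|) 1 with h | h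
        · rw [max_eq_left h, min_eq_right]
          · nlinarith [sq_nonneg y]
          · calc y ^ 2 = |y| ^ 2 := (sq_abs y).symm
              _ ≤ 1 := by nlinarith [abs_nonneg y]
        · have hy2 : (1:ℝ) ≤ y ^ 2 := by
            calc (1:ℝ) ≤ |y| ^ 2 := by nlinarith
              _ = y ^ 2 := sq_abs y
          rw [max_eq_right h, min_eq_left hy2, sq_abs]
          have hy0 : y ^ 2 ≠ 0 := by nlinarith
          have e : y ^ 2 * (1 / (2 * y ^ 2)) = 1 / 2 := by rw [mul_one_div, mul_comm (2:ℝ), ← div_div, div_self hy0]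
          rw [e]; norm_num


lemma psi1_bound (ν : Measure ℝ) [SigmaFinite ν] (b : ℝ) :
    ∫⁻ u in Set.Ioc (1:ℝ) b, ν {y : ℝ | u < |y|} / ENNReal.ofReal u
      ≤ ∫⁻ y in {y : ℝ | 1 < |y|}, ENNReal.ofReal (Real.log |y|) ∂ν := by
  set F : ℝ × ℝ → ENNReal := fun p =>
    ({p : ℝ × ℝ | p.1 < |p.2|}).indicator (fun p => (ENNReal.ofReal p.1)⁻¹) p with hF
  have hFmeas : Measurable F := by
    apply Measurable.indicator
    · fun_prop
    · exact measurableSet_lt (by fun_prop) (by fun_prop)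
  have hSmeas : ∀ u : ℝ, MeasurableSet {y : ℝ | u < |y|} := fun u =>
    measurableSet_lt (by fun_prop) (by fun_prop)
  have step1 : ∫⁻ u in Set.Ioc (1:ℝ) b, ν {y : ℝ | u < |y|} / ENNReal.ofReal u
      = ∫⁻ u in Set.Ioc (1:ℝ) b, ∫⁻ y, F (u, y) ∂ν := by
    apply lintegral_congr
    intro u
    have : ∫⁻ y, F (u, y) ∂ν = ∫⁻ y in {y : ℝ | u < |y|}, (ENNReal.ofReal u)⁻¹ ∂ν := by
      rw [← lintegral_indicator (hSmeas u)]
      apply lintegral_congr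
      intro y
      by_cases h : u < |y| <;> simp [hF, Set.indicator, h]
    rw [this, setLIntegral_const, div_eq_mul_inv, mul_comm]
  rw [step1, lintegral_lintegral_swap hFmeas.aemeasurable]
  have hbound : ∀ y : ℝ, ∫⁻ u in Set.Ioc (1:ℝ) b, F (u, y)
      ≤ ENNReal.ofReal (Real.log (max 1 |y|)) := by
    intro y
    have hIio : MeasurableSet (Set.Iio |y|) := measurableSet_Iio
    have e1 : ∫⁻ u in Set.Ioc (1:ℝ) b, F (u, y)
        = ∫⁻ u in Set.Iio |y| ∩ Set.Ioc 1 b, (ENNReal.ofReal u)⁻¹ := by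
      rw [← Measure.restrict_restrict hIio, ← lintegral_indicator hIio]
      apply lintegral_congr
      intro u
      by_cases h : u < |y| <;> simp [hF, Set.indicator, h, Set.mem_Iio]
    rw [e1]
    have hsub : Set.Iio |y| ∩ Set.Ioc 1 b ⊆ Set.Icc 1 (max 1 |y|) := by
      rintro u ⟨h1, h2, h3⟩
      exact ⟨h2.le, le_trans (le_of_lt h1) (le_max_right _ _)⟩
    calc ∫⁻ u in Set.Iio |y| ∩ Set.Ioc 1 b, (ENNReal.ofReal u)⁻¹
        ≤ ∫⁻ u in Set.Icc (1:ℝ) (max 1 |y|), (ENNReal.ofReal u)⁻¹ := lintegral_mono_set hsub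
      _ ≤ ENNReal.ofReal (Real.log (max 1 |y|)) := aux_log _ (le_max_left _ _)
  refine le_trans (lintegral_mono hbound) (le_of_eq ?_)
  ·
        have hs : MeasurableSet {y : ℝ | 1 < |y|} := measurableSet_lt (by fun_prop) (by fun_prop)
        rw [← lintegral_add_compl (fun y => ENNReal.ofReal (Real.log (max 1 |y|))) hs]
        have e2 : ∫⁻ y in {y : ℝ | 1 < |y|}ᶜ, ENNReal.ofReal (Real.log (max 1 |y|)) ∂ν = 0 := by
          rw [setLIntegral_congr_fun hs.compl (fun y hy => ?_), lintegral_zero]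
          have : |y| ≤ 1 := not_lt.mp hy
          simp [max_eq_left this]
        rw [e2, add_zero]
        apply setLIntegral_congr_fun hs
        intro y hy
        beta_reduce
        rw [max_eq_right (le_of_lt (show (1:ℝ) < |y| from hy))]

lemma M_split (ν : Measure ℝ) :
    ∫⁻ y, ENNReal.ofReal (min 1 (y ^ 2)) ∂ν
      = (∫⁻ y in {y : ℝ | |y| ≤ 1}, ENNReal.ofReal (y ^ 2) ∂ν) + ν {y : ℝ | 1 < |y|} := by
  have hs : MeasurableSet {y : ℝ | |y| ≤ 1} := measurableSet_le (by fun_prop) (by fun_prop)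
  have hcompl : {y : ℝ | |y| ≤ 1}ᶜ = {y : ℝ | 1 < |y|} := by
    ext y; simp [not_le]
  rw [← lintegral_add_compl (fun y => ENNReal.ofReal (min 1 (y ^ 2))) hs]
  congr 1
  · apply setLIntegral_congr_fun hs
    intro y hy
    have h1 : y ^ 2 ≤ 1 := by
      have : |y| ≤ 1 := hy
      calc y ^ 2 = |y| ^ 2 := (sq_abs y).symm
        _ ≤ 1 := by nlinarith [abs_nonneg y]
    beta_reduce
    rw [min_eq_right h1]
  · rw [hcompl, ← setLIntegral_one]
    apply setLIntegral_congr_fun (measurableSet_lt (by fun_prop) (by fun_prop))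
    intro y hy
    have h1 : (1:ℝ) ≤ y ^ 2 := by
      have : (1:ℝ) < |y| := hy
      calc (1:ℝ) ≤ |y| ^ 2 := by nlinarith
        _ = y ^ 2 := sq_abs y
    beta_reduce
    rw [min_eq_left h1, ENNReal.ofReal_one]

/-- Under the logarithmic moment condition, `∫_1^b (ψ₀(u)/u³ + ψ₁(u)/u) du` is bounded
uniformly in `b ≥ 1` by `2∫_{|y|>1} log|y| dν + ν{|y|>1} + ∫_{|y|≤1} y² dν`. -/
theorem integral_psi_bounded
    (ν : Measure ℝ) [SigmaFinite ν]
    (hν0 : ν {0} = 0)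
    (hνI : ∫⁻ y : ℝ, ENNReal.ofReal (min 1 (y ^ 2)) ∂ν ≠ ⊤)
    (hlog : ∫⁻ y in {y : ℝ | 1 < |y|}, ENNReal.ofReal (Real.log |y|) ∂ν ≠ ⊤) :
    (∀ b : ℝ, 1 ≤ b →
      ∫ u in Set.Ioc (1 : ℝ) b,
          ((∫ y in {y : ℝ | |y| ≤ u}, y ^ 2 ∂ν) / u ^ 3
            + (ν {y : ℝ | u < |y|}).toReal / u)
        ≤ 2 * (∫⁻ y in {y : ℝ | 1 < |y|}, ENNReal.ofReal (Real.log |y|) ∂ν).toReal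
          + (ν {y : ℝ | 1 < |y|}).toReal
          + ∫ y in {y : ℝ | |y| ≤ 1}, y ^ 2 ∂ν)
    ∧ BddAbove ((fun b : ℝ =>
        ∫ u in Set.Ioc (1 : ℝ) b,
          ((∫ y in {y : ℝ | |y| ≤ u}, y ^ 2 ∂ν) / u ^ 3
            + (ν {y : ℝ | u < |y|}).toReal / u)) '' Set.Ici 1) := by
  set A := ∫⁻ y in {y : ℝ | 1 < |y|}, ENNReal.ofReal (Real.log |y|) ∂ν with hA
  set C' := ∫⁻ y in {y : ℝ | |y| ≤ 1}, ENNReal.ofReal (y ^ 2) ∂ν with hC'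
  set B' := ν {y : ℝ | 1 < |y|} with hB'
  have hsplit : ∫⁻ y, ENNReal.ofReal (min 1 (y ^ 2)) ∂ν = C' + B' := M_split ν
  have hCB : C' ≠ ⊤ ∧ B' ≠ ⊤ := by
    rw [← ENNReal.add_ne_top, ← hsplit]; exact hνI
  have htop : C' + B' + A ≠ ⊤ := by
    rw [ENNReal.add_ne_top, ENNReal.add_ne_top]
    exact ⟨⟨hCB.1, hCB.2⟩, hlog⟩
  have hCeq : ∫ y in {y : ℝ | |y| ≤ 1}, y ^ 2 ∂ν = C'.toReal := by
    rw [hC', integral_eq_lintegral_of_nonneg_ae (ae_of_all _ fun y => sq_nonneg y)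
      (by fun_prop)]
  have key : ∀ b : ℝ, 1 ≤ b →
      ∫ u in Set.Ioc (1 : ℝ) b,
          ((∫ y in {y : ℝ | |y| ≤ u}, y ^ 2 ∂ν) / u ^ 3
            + (ν {y : ℝ | u < |y|}).toReal / u)
        ≤ 2 * A.toReal + B'.toReal + ∫ y in {y : ℝ | |y| ≤ 1}, y ^ 2 ∂ν := by
    intro b hb
    set h : ℝ → ℝ := fun u =>
      (∫ y in {y : ℝ | |y| ≤ u}, y ^ 2 ∂ν) / u ^ 3
        + (ν {y : ℝ | u < |y|}).toReal / u with hh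
    have hG : (∫⁻ u in Set.Ioc (1:ℝ) b,
        ((∫⁻ y in {y : ℝ | |y| ≤ u}, ENNReal.ofReal (y ^ 2) ∂ν) / ENNReal.ofReal (u ^ 3)
          + ν {y : ℝ | u < |y|} / ENNReal.ofReal u)) ≤ C' + B' + A := by
      have hmeas1 : Measurable (fun u : ℝ =>
          (∫⁻ y in {y : ℝ | |y| ≤ u}, ENNReal.ofReal (y ^ 2) ∂ν) / ENNReal.ofReal (u ^ 3)) := by
        apply Measurable.div
        · apply Monotone.measurable
          intro u v huv
          apply lintegral_mono_set
          intro y hy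
          exact le_trans hy huv
        · fun_prop
      rw [lintegral_add_left hmeas1]
      rw [← hsplit]
      exact add_le_add (psi0_bound ν b hb) (psi1_bound ν b)
    by_cases hInt : Integrable h (volume.restrict (Set.Ioc (1:ℝ) b))
    · have h0 : 0 ≤ᵐ[volume.restrict (Set.Ioc (1:ℝ) b)] h := by
        filter_upwards [ae_restrict_mem measurableSet_Ioc] with u hu
        have hu0 : (0:ℝ) < u := lt_trans one_pos hu.1
        have hi : 0 ≤ ∫ y in {y : ℝ | |y| ≤ u}, y ^ 2 ∂ν :=
          integral_nonneg fun y => sq_nonneg y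
        have ht : 0 ≤ (ν {y : ℝ | u < |y|}).toReal := ENNReal.toReal_nonneg
        exact add_nonneg (div_nonneg hi (by positivity)) (div_nonneg ht hu0.le)
      have h1 : ENNReal.ofReal (∫ u in Set.Ioc (1:ℝ) b, h u)
          ≤ ∫⁻ u in Set.Ioc (1:ℝ) b, ENNReal.ofReal (h u) :=
        le_of_eq (ofReal_integral_eq_lintegral_ofReal hInt h0)
      have h2 : ∫⁻ u in Set.Ioc (1:ℝ) b, ENNReal.ofReal (h u)
          ≤ ∫⁻ u in Set.Ioc (1:ℝ) b,
            ((∫⁻ y in {y : ℝ | |y| ≤ u}, ENNReal.ofReal (y ^ 2) ∂ν) / ENNReal.ofReal (u ^ 3)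
              + ν {y : ℝ | u < |y|} / ENNReal.ofReal u) := by
        apply lintegral_mono_ae
        filter_upwards [ae_restrict_mem measurableSet_Ioc] with u hu
        have hu0 : (0:ℝ) < u := lt_trans one_pos hu.1
        have t1 : ENNReal.ofReal ((∫ y in {y : ℝ | |y| ≤ u}, y ^ 2 ∂ν) / u ^ 3)
            ≤ (∫⁻ y in {y : ℝ | |y| ≤ u}, ENNReal.ofReal (y ^ 2) ∂ν) / ENNReal.ofReal (u ^ 3) := by
          rw [ENNReal.ofReal_div_of_pos (by positivity)]
          apply ENNReal.div_le_div_right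
          rw [integral_eq_lintegral_of_nonneg_ae (ae_of_all _ fun y => sq_nonneg y)
            (by fun_prop)]
          exact ENNReal.ofReal_toReal_le
        have t2 : ENNReal.ofReal ((ν {y : ℝ | u < |y|}).toReal / u)
            ≤ ν {y : ℝ | u < |y|} / ENNReal.ofReal u := by
          rw [ENNReal.ofReal_div_of_pos hu0]
          exact ENNReal.div_le_div_right ENNReal.ofReal_toReal_le _
        calc ENNReal.ofReal (h u)
            ≤ ENNReal.ofReal ((∫ y in {y : ℝ | |y| ≤ u}, y ^ 2 ∂ν) / u ^ 3)
              + ENNReal.ofReal ((ν {y : ℝ | u < |y|}).toReal / u) := ENNReal.ofReal_add_le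
          _ ≤ _ := add_le_add t1 t2
      have h3 : ∫ u in Set.Ioc (1:ℝ) b, h u ≤ (C' + B' + A).toReal :=
        (ENNReal.ofReal_le_iff_le_toReal htop).1 (le_trans h1 (le_trans h2 hG))
      have h4 : (C' + B' + A).toReal = C'.toReal + B'.toReal + A.toReal := by
        rw [ENNReal.toReal_add (ENNReal.add_ne_top.mpr ⟨hCB.1, hCB.2⟩) hlog,
          ENNReal.toReal_add hCB.1 hCB.2]
      have hA0 : 0 ≤ A.toReal := ENNReal.toReal_nonneg
      rw [hCeq]
      calc ∫ u in Set.Ioc (1:ℝ) b, h u ≤ (C' + B' + A).toReal := h3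
        _ = C'.toReal + B'.toReal + A.toReal := h4
        _ ≤ 2 * A.toReal + B'.toReal + C'.toReal := by linarith
    · rw [integral_undef hInt]
      have hi : 0 ≤ ∫ y in {y : ℝ | |y| ≤ 1}, y ^ 2 ∂ν := integral_nonneg fun y => sq_nonneg y
      have hA0 : 0 ≤ A.toReal := ENNReal.toReal_nonneg
      have hB0 : 0 ≤ B'.toReal := ENNReal.toReal_nonneg
      linarith
  refine ⟨key, ?_⟩
  refine ⟨2 * A.toReal + B'.toReal + ∫ y in {y : ℝ | |y| ≤ 1}, y ^ 2 ∂ν, ?_⟩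
  rintro x ⟨b, hb, rfl⟩
  exact key b hb
end

section
/- Let ν be a Lévy measure on ℝ with ∫_{{|y| > 1}} log|y| ν(dy) < ∞, let (β_n)_{n≥1} be a bounded sequence of positive real numbers, and let (γ_n)_{n≥1} be positive real numbers with ∑_{n≥1} 1/γ_n < ∞. Then ∑_{n≥1} (1/γ_n) ∫_{1/β_n}^{e^{γ_n}/β_n} ( ψ₀(u)/u³ + ψ₁(u)/u ) du < ∞, where ψ₀(u) = ∫_{{|y| ≤ u}} y² ν(dy) and ψ₁(u) = ν({y : |y| > u}). -/
open MeasureTheory Set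


lemma lint_cube {m : ℝ} (hm : 0 < m) :
    ∫⁻ u in Set.Ioi m, (ENNReal.ofReal (u ^ 3))⁻¹
      ≤ ENNReal.ofReal (1 / (2 * m ^ 2)) := by
  have h1 : ∀ u ∈ Set.Ioi m, (ENNReal.ofReal (u ^ 3))⁻¹ = ENNReal.ofReal (u ^ (-3 : ℝ)) := by
    intro u hu
    have hu0 : 0 < u := hm.trans hu
    rw [Real.rpow_neg hu0.le, show ((3:ℝ)) = ((3:ℕ):ℝ) by norm_num, Real.rpow_natCast,
      ← ENNReal.ofReal_inv_of_pos (by positivity)]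
  rw [setLIntegral_congr_fun measurableSet_Ioi h1,
    ← ofReal_integral_eq_lintegral_ofReal (integrableOn_Ioi_rpow_of_lt (by norm_num) hm)
      ((ae_restrict_iff' measurableSet_Ioi).2 (ae_of_all _ fun u hu =>
        Real.rpow_nonneg (hm.trans hu).le _)),
    integral_Ioi_rpow_of_lt (by norm_num) hm]
  apply ENNReal.ofReal_le_ofReal
  have h2 : m ^ ((-3:ℝ)+1) = (m^2)⁻¹ := by
    rw [show ((-3:ℝ)+1) = -((2:ℕ):ℝ) by push_cast; ring, Real.rpow_neg hm.le,
      Real.rpow_natCast]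
  rw [h2]
  have hm2 : (m:ℝ) ^ 2 ≠ 0 := by positivity
  apply le_of_eq
  field_simp
  ring

lemma lint_inv {c m : ℝ} (hc : 0 < c) :
    ∫⁻ u in Set.Ioo c m, (ENNReal.ofReal u)⁻¹
      ≤ ENNReal.ofReal (Real.log m - Real.log c) := by
  rcases le_or_gt m c with h | h
  · rw [Set.Ioo_eq_empty (by exact fun h2 => absurd h (not_le.2 h2))]
    simp
  · have key : ∀ u ∈ Set.Ioo c m, (ENNReal.ofReal u)⁻¹ = ENNReal.ofReal u⁻¹ :=
      fun u hu => (ENNReal.ofReal_inv_of_pos (hc.trans hu.1)).symm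
    have hint : IntegrableOn (fun u : ℝ => u⁻¹) (Set.Ioo c m) := by
      apply (ContinuousOn.integrableOn_compact (isCompact_Icc (a := c) (b := m)) ?_).mono_set
        Set.Ioo_subset_Icc_self
      exact ContinuousOn.inv₀ (continuousOn_id) fun x hx => (hc.trans_le hx.1).ne'
    rw [setLIntegral_congr_fun measurableSet_Ioo key,
      ← ofReal_integral_eq_lintegral_ofReal hint
        ((ae_restrict_iff' measurableSet_Ioo).2 (ae_of_all _ fun u hu =>
          inv_nonneg.2 (hc.trans hu.1).le))]
    apply ENNReal.ofReal_le_ofReal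
    rw [show (∫ u in Set.Ioo c m, u⁻¹) = ∫ u in Set.Ioc c m, u⁻¹ from by
        rw [restrict_Ioo_eq_restrict_Ioc],
      ← intervalIntegral.integral_of_le h.le,
      integral_inv_of_pos hc (hc.trans h), Real.log_div (hc.trans h).ne' hc.ne']


lemma tail_ne_top (ν : Measure ℝ) {c : ℝ} (hc : 0 < c) (hc1 : c ≤ 1)
    (hνI : ∫⁻ y : ℝ, ENNReal.ofReal (min 1 (y ^ 2)) ∂ν ≠ ⊤) :
    ν {y : ℝ | c < |y|} ≠ ⊤ := by
  have h1 : ENNReal.ofReal (c ^ 2) * ν {y : ℝ | c < |y|}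
      ≤ ∫⁻ y, ENNReal.ofReal (min 1 (y ^ 2)) ∂ν := by
    rw [← setLIntegral_const {y : ℝ | c < |y|} (ENNReal.ofReal (c ^ 2))]
    calc ∫⁻ y in {y : ℝ | c < |y|}, ENNReal.ofReal (c ^ 2) ∂ν
        ≤ ∫⁻ y in {y : ℝ | c < |y|}, ENNReal.ofReal (min 1 (y ^ 2)) ∂ν := by
          apply setLIntegral_mono
            ((continuous_const.min (continuous_pow 2)).measurable.ennreal_ofReal)
          intro y hy
          apply ENNReal.ofReal_le_ofReal
          have h2 : c ^ 2 ≤ y ^ 2 := by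
            have := hy
            simp only [Set.mem_setOf_eq] at this
            nlinarith [abs_nonneg y, sq_abs y, hc]
          exact le_min (by nlinarith) h2
      _ ≤ ∫⁻ y, ENNReal.ofReal (min 1 (y ^ 2)) ∂ν := setLIntegral_le_lintegral _ _
  intro htop
  rw [htop, ENNReal.mul_top (by simp [ENNReal.ofReal_eq_zero]; positivity), top_le_iff] at h1
  exact hνI h1


lemma K0_ne_top (ν : Measure ℝ) [SigmaFinite ν] {c : ℝ} (hc : 0 < c) (hc1 : c ≤ 1)
    (hνI : ∫⁻ y : ℝ, ENNReal.ofReal (min 1 (y ^ 2)) ∂ν ≠ ⊤) :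
    (∫⁻ u in Set.Ioi c,
      (∫⁻ y in {y : ℝ | |y| ≤ u}, ENNReal.ofReal (y ^ 2) ∂ν) / ENNReal.ofReal (u ^ 3)) ≠ ⊤ := by
  set F : ℝ × ℝ → ENNReal := fun p =>
    ({p : ℝ × ℝ | |p.2| ≤ p.1}.indicator (fun p => ENNReal.ofReal (p.2 ^ 2)) p)
      * (ENNReal.ofReal (p.1 ^ 3))⁻¹ with hF
  have hsetm : MeasurableSet {p : ℝ × ℝ | |p.2| ≤ p.1} :=
    measurableSet_le measurable_snd.abs measurable_fst
  have hFm : Measurable F :=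
    (Measurable.indicator (measurable_snd.pow_const 2).ennreal_ofReal hsetm).mul
      ((measurable_fst.pow_const 3).ennreal_ofReal.inv)
  have step1 : ∀ u : ℝ,
      (∫⁻ y in {y : ℝ | |y| ≤ u}, ENNReal.ofReal (y ^ 2) ∂ν) / ENNReal.ofReal (u ^ 3)
        = ∫⁻ y, F (u, y) ∂ν := by
    intro u
    rw [div_eq_mul_inv,
      ← lintegral_indicator (measurableSet_le measurable_abs measurable_const),
      ← lintegral_mul_const _ (Measurable.indicator
        ((continuous_pow 2).measurable.ennreal_ofReal)
        (measurableSet_le measurable_abs measurable_const))]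
    congr 1
  simp_rw [step1]
  rw [lintegral_lintegral_swap hFm.aemeasurable]
  have step2 : ∀ y : ℝ, (∫⁻ u in Set.Ioi c, F (u, y))
      ≤ ENNReal.ofReal (1 / (2 * c ^ 2) * min 1 (y ^ 2)) := by
    intro y
    have hMy : 0 < max c |y| := lt_of_lt_of_le hc (le_max_left _ _)
    have hFy : (fun u => F (u, y))
        = fun u => (Set.Ici |y|).indicator
            (fun u => ENNReal.ofReal (y ^ 2) * (ENNReal.ofReal (u ^ 3))⁻¹) u := by
      funext u
      simp only [hF, Set.indicator_apply, Set.mem_setOf_eq, Set.mem_Ici]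
      split_ifs with h
      · rfl
      · rw [zero_mul]
    rw [hFy]
    calc ∫⁻ u in Set.Ioi c, (Set.Ici |y|).indicator
            (fun u => ENNReal.ofReal (y ^ 2) * (ENNReal.ofReal (u ^ 3))⁻¹) u
        = ∫⁻ u in Set.Ici |y| ∩ Set.Ioi c,
            ENNReal.ofReal (y ^ 2) * (ENNReal.ofReal (u ^ 3))⁻¹ := by
          rw [lintegral_indicator measurableSet_Ici, Measure.restrict_restrict measurableSet_Ici]
      _ ≤ ∫⁻ u in Set.Ici (max c |y|),
            ENNReal.ofReal (y ^ 2) * (ENNReal.ofReal (u ^ 3))⁻¹ := by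
          apply lintegral_mono_set
          rintro u ⟨h1, h2⟩
          exact max_le (le_of_lt h2) (Set.mem_Ici.1 h1)
      _ = ∫⁻ u in Set.Ioi (max c |y|),
            ENNReal.ofReal (y ^ 2) * (ENNReal.ofReal (u ^ 3))⁻¹ := by
          rw [restrict_Ioi_eq_restrict_Ici]
      _ = ENNReal.ofReal (y ^ 2) * ∫⁻ u in Set.Ioi (max c |y|), (ENNReal.ofReal (u ^ 3))⁻¹ := by
          rw [lintegral_const_mul (f := fun u : ℝ => (ENNReal.ofReal (u ^ 3))⁻¹) _ (continuous_pow 3).measurable.ennreal_ofReal.inv]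
      _ ≤ ENNReal.ofReal (y ^ 2) * ENNReal.ofReal (1 / (2 * (max c |y|) ^ 2)) :=
          mul_le_mul_right (lint_cube hMy) _
      _ = ENNReal.ofReal (y ^ 2 * (1 / (2 * (max c |y|) ^ 2))) :=
          (ENNReal.ofReal_mul (sq_nonneg y)).symm
      _ ≤ ENNReal.ofReal (1 / (2 * c ^ 2) * min 1 (y ^ 2)) := by
          apply ENNReal.ofReal_le_ofReal
          have h1 : c ≤ max c |y| := le_max_left _ _
          have h2 : |y| ≤ max c |y| := le_max_right _ _
          have h3 : 0 < (max c |y|) ^ 2 := by positivity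
          rw [mul_one_div, one_div_mul_eq_div, div_le_div_iff₀ (by positivity) (by positivity)]
          rcases le_or_gt (|y|) 1 with h | h
          · have hm : min 1 (y ^ 2) = y ^ 2 :=
              min_eq_right (by nlinarith [sq_abs y, abs_nonneg y])
            rw [hm]
            nlinarith [sq_nonneg y, hc, mul_self_le_mul_self hc.le h1]
          · have hm : min 1 (y ^ 2) = 1 :=
              min_eq_left (by nlinarith [sq_abs y, abs_nonneg y])
            rw [hm]
            have hcc : c ^ 2 ≤ 1 := by nlinarith
            have hyM : y ^ 2 ≤ (max c |y|) ^ 2 := by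
              nlinarith [mul_self_le_mul_self (abs_nonneg y) h2, sq_abs y]
            nlinarith [mul_nonneg (sq_nonneg y) (sub_nonneg.2 hcc)]
  have step3 : (∫⁻ y, ENNReal.ofReal (1 / (2 * c ^ 2) * min 1 (y ^ 2)) ∂ν) ≠ ⊤ := by
    have heq : ∀ y : ℝ, ENNReal.ofReal (1 / (2 * c ^ 2) * min 1 (y ^ 2))
        = ENNReal.ofReal (1 / (2 * c ^ 2)) * ENNReal.ofReal (min 1 (y ^ 2)) :=
      fun y => ENNReal.ofReal_mul (by positivity)
    simp_rw [heq]
    rw [lintegral_const_mul _ ((continuous_const.min (continuous_pow 2)).measurable.ennreal_ofReal)]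
    exact ENNReal.mul_ne_top ENNReal.ofReal_ne_top hνI
  exact ne_top_of_le_ne_top step3 (lintegral_mono step2)


lemma K1_ne_top (ν : Measure ℝ) [SigmaFinite ν] {c : ℝ} (hc : 0 < c) (hc1 : c ≤ 1)
    (hνI : ∫⁻ y : ℝ, ENNReal.ofReal (min 1 (y ^ 2)) ∂ν ≠ ⊤)
    (hlog : ∫⁻ y in {y : ℝ | 1 < |y|}, ENNReal.ofReal (Real.log |y|) ∂ν ≠ ⊤) :
    (∫⁻ u in Set.Ioi c, ν {y : ℝ | u < |y|} / ENNReal.ofReal u) ≠ ⊤ := by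
  set F : ℝ × ℝ → ENNReal := fun p =>
    ({p : ℝ × ℝ | p.1 < |p.2|}.indicator (1 : ℝ × ℝ → ENNReal) p)
      * (ENNReal.ofReal p.1)⁻¹ with hF
  have hsetm : MeasurableSet {p : ℝ × ℝ | p.1 < |p.2|} :=
    measurableSet_lt measurable_fst measurable_snd.abs
  have hFm : Measurable F :=
    (Measurable.indicator measurable_one hsetm).mul
      (measurable_fst.ennreal_ofReal.inv)
  have step1 : ∀ u : ℝ, ν {y : ℝ | u < |y|} / ENNReal.ofReal u = ∫⁻ y, F (u, y) ∂ν := by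
    intro u
    rw [div_eq_mul_inv,
      ← lintegral_indicator_one (measurableSet_lt measurable_const measurable_abs),
      ← lintegral_mul_const _ (Measurable.indicator (measurable_one : Measurable (1 : ℝ → ENNReal))
        (measurableSet_lt measurable_const measurable_abs))]
    congr 1
  simp_rw [step1]
  rw [lintegral_lintegral_swap hFm.aemeasurable]
  set H : ℝ → ENNReal := fun y =>
    ENNReal.ofReal (-Real.log c) * ({y : ℝ | c < |y|}.indicator (1 : ℝ → ENNReal) y)
      + {y : ℝ | 1 < |y|}.indicator (fun y => ENNReal.ofReal (Real.log |y|)) y with hH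
  have step2 : ∀ y : ℝ, (∫⁻ u in Set.Ioi c, F (u, y)) ≤ H y := by
    intro y
    have hFy : (fun u => F (u, y))
        = fun u => (Set.Iio |y|).indicator (fun u => (ENNReal.ofReal u)⁻¹) u := by
      funext u
      simp only [hF, Set.indicator_apply, Set.mem_setOf_eq, Set.mem_Iio, Pi.one_apply]
      split_ifs with h
      · rw [one_mul]
      · rw [zero_mul]
    rw [hFy]
    have hcalc : (∫⁻ u in Set.Ioi c, (Set.Iio |y|).indicator (fun u => (ENNReal.ofReal u)⁻¹) u)
        = ∫⁻ u in Set.Ioo c |y|, (ENNReal.ofReal u)⁻¹ := by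
      rw [lintegral_indicator measurableSet_Iio, Measure.restrict_restrict measurableSet_Iio,
        Set.Iio_inter_Ioi]
    rw [hcalc]
    rcases le_or_gt (|y|) c with h | h
    · rw [Set.Ioo_eq_empty (by exact fun h2 => absurd h (not_le.2 h2))]
      simp
    · calc (∫⁻ u in Set.Ioo c |y|, (ENNReal.ofReal u)⁻¹)
          ≤ ENNReal.ofReal (Real.log |y| - Real.log c) := lint_inv hc
        _ ≤ ENNReal.ofReal (-Real.log c) + ENNReal.ofReal (Real.log |y|) := by
            rw [sub_eq_add_neg, add_comm]
            exact ENNReal.ofReal_add_le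
        _ ≤ H y := by
            rw [hH]
            apply add_le_add
            · rw [Set.indicator_of_mem (by exact h : y ∈ {y : ℝ | c < |y|}), Pi.one_apply, mul_one]
            · rcases le_or_gt (|y|) 1 with h1 | h1
              · rw [ENNReal.ofReal_eq_zero.2 (Real.log_nonpos (abs_nonneg y) h1)]
                exact zero_le
              · rw [Set.indicator_of_mem (by exact h1 : y ∈ {y : ℝ | 1 < |y|})]
  have step3 : (∫⁻ y, H y ∂ν) ≠ ⊤ := by
    rw [hH, lintegral_add_left (((measurable_one : Measurable (1 : ℝ → ENNReal)).indicator
      (measurableSet_lt measurable_const measurable_abs)).const_mul _),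
      lintegral_const_mul _ ((measurable_one : Measurable (1 : ℝ → ENNReal)).indicator
        (measurableSet_lt measurable_const measurable_abs)),
      lintegral_indicator_one (measurableSet_lt measurable_const measurable_abs),
      lintegral_indicator (measurableSet_lt measurable_const measurable_abs)]
    exact ENNReal.add_ne_top.2
      ⟨ENNReal.mul_ne_top ENNReal.ofReal_ne_top (tail_ne_top ν hc hc1 hνI), hlog⟩
  exact ne_top_of_le_ne_top step3 (lintegral_mono step2)

/-- If `ν` has a finite logarithmic moment at infinity, `(β_n)` is bounded and
`∑ 1/γ_n < ∞`, then `∑ (1/γ_n) ∫_{1/β_n}^{e^{γ_n}/β_n} (ψ₀(u)/u³ + ψ₁(u)/u) du < ∞`. -/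
theorem sum_finite_of_log_moment
    (ν : Measure ℝ) [SigmaFinite ν]
    (hν0 : ν {0} = 0)
    (hνI : ∫⁻ y : ℝ, ENNReal.ofReal (min 1 (y ^ 2)) ∂ν ≠ ⊤)
    (hlog : ∫⁻ y in {y : ℝ | 1 < |y|}, ENNReal.ofReal (Real.log |y|) ∂ν ≠ ⊤)
    (β γ : ℕ → ℝ) (hβ : ∀ n, 0 < β n) (hγ : ∀ n, 0 < γ n)
    (hβbd : ∃ C : ℝ, ∀ n, β n ≤ C)
    (hγsum : Summable (fun n => 1 / γ n)) :
    (∑' n, ENNReal.ofReal (1 / γ n)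
        * ∫⁻ u in Set.Ioc (1 / β n) (Real.exp (γ n) / β n),
            ((∫⁻ y in {y : ℝ | |y| ≤ u}, ENNReal.ofReal (y ^ 2) ∂ν)
                / ENNReal.ofReal (u ^ 3)
              + ν {y : ℝ | u < |y|} / ENNReal.ofReal u)) ≠ ⊤ := by
  obtain ⟨C, hC⟩ := hβbd
  have hC0 : 0 < C := lt_of_lt_of_le (hβ 0) (hC 0)
  set c : ℝ := min 1 C⁻¹ with hc_def
  have hc : 0 < c := lt_min one_pos (inv_pos.2 hC0)
  have hc1 : c ≤ 1 := min_le_left _ _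
  set K : ENNReal := ∫⁻ u in Set.Ioi c,
      ((∫⁻ y in {y : ℝ | |y| ≤ u}, ENNReal.ofReal (y ^ 2) ∂ν) / ENNReal.ofReal (u ^ 3)
        + ν {y : ℝ | u < |y|} / ENNReal.ofReal u) with hK
  have hsub : ∀ n, Set.Ioc (1 / β n) (Real.exp (γ n) / β n) ⊆ Set.Ioi c := by
    intro n u hu
    have h1 : c ≤ 1 / β n := by
      calc c ≤ C⁻¹ := min_le_right _ _
        _ ≤ (β n)⁻¹ := by
            apply inv_anti₀ (hβ n) (hC n)
        _ = 1 / β n := (one_div _).symm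
    exact lt_of_le_of_lt h1 hu.1
  have hmono : Monotone (fun u : ℝ => ∫⁻ y in {y : ℝ | |y| ≤ u}, ENNReal.ofReal (y ^ 2) ∂ν) := by
    intro a b hab
    exact lintegral_mono_set (fun y hy => le_trans hy hab)
  have hmeas0 : Measurable (fun u : ℝ =>
      (∫⁻ y in {y : ℝ | |y| ≤ u}, ENNReal.ofReal (y ^ 2) ∂ν) / ENNReal.ofReal (u ^ 3)) :=
    (hmono.measurable).div ((continuous_pow 3).measurable.ennreal_ofReal)
  have hKne : K ≠ ⊤ := by
    rw [hK, lintegral_add_left hmeas0]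
    exact ENNReal.add_ne_top.2 ⟨K0_ne_top ν hc hc1 hνI, K1_ne_top ν hc hc1 hνI hlog⟩
  have hsumne : (∑' n, ENNReal.ofReal (1 / γ n)) ≠ ⊤ := by
    rw [← ENNReal.ofReal_tsum_of_nonneg (fun n => one_div_nonneg.2 (hγ n).le) hγsum]
    exact ENNReal.ofReal_ne_top
  apply ne_top_of_le_ne_top (ENNReal.mul_ne_top hsumne hKne)
  calc (∑' n, ENNReal.ofReal (1 / γ n)
        * ∫⁻ u in Set.Ioc (1 / β n) (Real.exp (γ n) / β n),
            ((∫⁻ y in {y : ℝ | |y| ≤ u}, ENNReal.ofReal (y ^ 2) ∂ν)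
                / ENNReal.ofReal (u ^ 3)
              + ν {y : ℝ | u < |y|} / ENNReal.ofReal u))
      ≤ ∑' n, ENNReal.ofReal (1 / γ n) * K :=
        ENNReal.tsum_le_tsum (fun n => mul_le_mul_right (lintegral_mono_set (hsub n)) _)
    _ = (∑' n, ENNReal.ofReal (1 / γ n)) * K := ENNReal.tsum_mul_right
end

section
/- Let ν be a Lévy measure on ℝ with ∫_{{|y| > 1}} log|y| ν(dy) < ∞, and let β > 0, γ > 0. Then for every h ∈ ℝ, ∫_0^∞ ( ∫_ℝ ( 1 − cos( e^{−γ s} β h y ) ) ν(dy) ) ds < ∞. (This shows that the Lévy exponent of the invariant law of the one-dimensional Ornstein–Uhlenbeck process driven by the Lévy noise with jump measure ν is finite.) -/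
open MeasureTheory Set Real
open scoped ENNReal NNReal

private lemma aux_one_sub_cos (x : ℝ) : 1 - Real.cos x ≤ 2 * min 1 (x ^ 2) := by
  rcases le_total (x ^ 2) 1 with h | h
  · rw [min_eq_right h]
    have := Real.one_sub_sq_div_two_le_cos (x := x)
    nlinarith
  · rw [min_eq_left h]
    have := Real.neg_one_le_cos x
    linarith

private lemma aux_exp_lintegral {b : ℝ} (hb : 0 < b) (a : ℝ) :
    ∫⁻ s in Set.Ioi a, ENNReal.ofReal (Real.exp (-(b * (s - a)))) = ENNReal.ofReal (1 / b) := by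
  have hfun : ∀ s : ℝ, Real.exp (-(b * (s - a))) = Real.exp (b * a) * Real.exp (-(b * s)) := by
    intro s; rw [← Real.exp_add]; ring_nf
  have hint : IntegrableOn (fun s : ℝ => Real.exp (-(b * (s - a)))) (Set.Ioi a) := by
    have := (exp_neg_integrableOn_Ioi a hb).const_mul (Real.exp (b * a))
    refine this.congr (Filter.Eventually.of_forall fun s => ?_)
    simp only []; rw [hfun s, neg_mul]
  rw [← ofReal_integral_eq_lintegral_ofReal hint
      (Filter.Eventually.of_forall fun s => (Real.exp_pos _).le)]
  congr 1
  have h1 : (∫ s in Set.Ioi a, Real.exp (-(b * (s - a)))) =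
      Real.exp (b * a) * ∫ s in Set.Ioi a, Real.exp (-(b * s)) := by
    rw [← MeasureTheory.integral_const_mul]
    exact setIntegral_congr_fun measurableSet_Ioi fun s _ => hfun s
  have h2 : (∫ s in Set.Ioi a, Real.exp (-(b * s))) = b⁻¹ * Real.exp (-(b * a)) := by
    have := integral_comp_mul_left_Ioi (fun u => Real.exp (-u)) a hb
    simp only [smul_eq_mul] at this
    rw [this, integral_exp_neg_Ioi]
  rw [h1, h2]
  rw [show Real.exp (b * a) * (b⁻¹ * Real.exp (-(b * a)))
      = (Real.exp (b * a) * Real.exp (-(b * a))) * b⁻¹ from by ring, ← Real.exp_add]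
  simp [one_div]

private lemma aux_time_integral {γ t : ℝ} (hγ : 0 < γ) (ht : 0 ≤ t) :
    ∫⁻ s in Set.Ioi (0:ℝ), ENNReal.ofReal (min 1 (Real.exp (-(2 * γ * s)) * t))
      ≤ ENNReal.ofReal (max 0 (Real.log t) / (2 * γ)) + ENNReal.ofReal (min 1 t / (2 * γ)) := by
  set L : ℝ := max 0 (Real.log t) / (2 * γ) with hL
  have h2γ : 0 < 2 * γ := by linarith
  have hL0 : 0 ≤ L := div_nonneg (le_max_left _ _) h2γ.le
  have hptwise : ∀ s ∈ Set.Ioi (0:ℝ),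
      ENNReal.ofReal (min 1 (Real.exp (-(2 * γ * s)) * t)) ≤
        (Set.Ioc 0 L).indicator (fun _ => 1) s
        + (Set.Ioi L).indicator
            (fun s => ENNReal.ofReal (min 1 t * Real.exp (-(2 * γ * (s - L))))) s := by
    intro s hs
    rcases le_or_gt s L with hsL | hsL
    · have h1 : (Set.Ioc 0 L).indicator (fun _ => (1:ℝ≥0∞)) s = 1 :=
        Set.indicator_of_mem (Set.mem_Ioc.mpr ⟨hs, hsL⟩) _
      calc ENNReal.ofReal (min 1 (Real.exp (-(2 * γ * s)) * t)) ≤ 1 := by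
            rw [show (1:ℝ≥0∞) = ENNReal.ofReal 1 by simp]
            exact ENNReal.ofReal_le_ofReal (min_le_left _ _)
        _ ≤ _ := by rw [h1]; exact le_add_right le_rfl
    · have h2 : (Set.Ioi L).indicator
          (fun s => ENNReal.ofReal (min 1 t * Real.exp (-(2 * γ * (s - L))))) s
          = ENNReal.ofReal (min 1 t * Real.exp (-(2 * γ * (s - L)))) :=
        Set.indicator_of_mem hsL _
      refine le_trans ?_ (le_add_left (le_of_eq h2.symm))
      apply ENNReal.ofReal_le_ofReal
      rcases le_total t 1 with ht1 | ht1
      · have hLz : L = 0 := by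
          rw [hL, max_eq_left (Real.log_nonpos ht ht1), zero_div]
        rw [min_eq_right ht1, hLz, sub_zero]
        calc min 1 (Real.exp (-(2 * γ * s)) * t) ≤ Real.exp (-(2 * γ * s)) * t :=
              min_le_right _ _
          _ = t * Real.exp (-(2 * γ * s)) := mul_comm _ _
      · have hLlog : 2 * γ * L = Real.log t := by
          rw [hL, max_eq_right (Real.log_nonneg ht1)]
          field_simp
        rw [min_eq_left ht1, one_mul]
        calc min 1 (Real.exp (-(2 * γ * s)) * t) ≤ Real.exp (-(2 * γ * s)) * t :=
              min_le_right _ _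
          _ = Real.exp (-(2 * γ * (s - L))) := by
              rw [show -(2 * γ * (s - L)) = -(2*γ*s) + 2*γ*L by ring, Real.exp_add,
                hLlog, Real.exp_log (lt_of_lt_of_le one_pos ht1)]
  calc ∫⁻ s in Set.Ioi (0:ℝ), ENNReal.ofReal (min 1 (Real.exp (-(2 * γ * s)) * t))
      ≤ ∫⁻ s in Set.Ioi (0:ℝ),
          ((Set.Ioc 0 L).indicator (fun _ => 1) s
          + (Set.Ioi L).indicator
              (fun s => ENNReal.ofReal (min 1 t * Real.exp (-(2 * γ * (s - L))))) s) := by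
        refine setLIntegral_mono' measurableSet_Ioi hptwise
    _ = (∫⁻ s in Set.Ioi (0:ℝ), (Set.Ioc 0 L).indicator (fun _ => 1) s)
        + ∫⁻ s in Set.Ioi (0:ℝ), (Set.Ioi L).indicator
            (fun s => ENNReal.ofReal (min 1 t * Real.exp (-(2 * γ * (s - L))))) s := by
        apply lintegral_add_left
        exact (measurable_const.indicator measurableSet_Ioc)
    _ ≤ ENNReal.ofReal (max 0 (Real.log t) / (2 * γ)) + ENNReal.ofReal (min 1 t / (2 * γ)) := by
        gcongr
        · rw [lintegral_indicator measurableSet_Ioc, setLIntegral_const,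
            Measure.restrict_apply measurableSet_Ioc,
            Set.inter_eq_self_of_subset_left Set.Ioc_subset_Ioi_self, Real.volume_Ioc]
          simp
          exact le_rfl
        · have heq : ∀ s : ℝ, ENNReal.ofReal (min 1 t * Real.exp (-(2 * γ * (s - L))))
              = ENNReal.ofReal (min 1 t) * ENNReal.ofReal (Real.exp (-(2 * γ * (s - L)))) := by
            intro s
            exact ENNReal.ofReal_mul (le_min zero_le_one ht)
          rw [lintegral_indicator measurableSet_Ioi,
            Measure.restrict_restrict measurableSet_Ioi,
            Set.inter_eq_self_of_subset_left (Set.Ioi_subset_Ioi hL0)]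
          simp only [heq]
          rw [lintegral_const_mul' _ _ ENNReal.ofReal_ne_top, aux_exp_lintegral h2γ L,
            ← ENNReal.ofReal_mul (le_min zero_le_one ht), mul_one_div]

private lemma aux_min_term (ν : Measure ℝ)
    (hνI : ∫⁻ y : ℝ, ENNReal.ofReal (min 1 (y ^ 2)) ∂ν ≠ ⊤) (c γ : ℝ) (hγ : 0 < γ) :
    ∫⁻ y : ℝ, ENNReal.ofReal (min 1 (c ^ 2 * y ^ 2) / (2 * γ)) ∂ν ≠ ⊤ := by
  have h2γ : (0:ℝ) < 2 * γ := by linarith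
  have hpt : ∀ y : ℝ, ENNReal.ofReal (min 1 (c ^ 2 * y ^ 2) / (2 * γ))
      ≤ ENNReal.ofReal (max 1 (c ^ 2) / (2 * γ)) * ENNReal.ofReal (min 1 (y ^ 2)) := by
    intro y
    rw [← ENNReal.ofReal_mul (by positivity)]
    apply ENNReal.ofReal_le_ofReal
    rw [div_mul_eq_mul_div]
    gcongr
    rcases le_total (y ^ 2) 1 with h | h
    · rw [min_eq_right h]
      calc min 1 (c ^ 2 * y ^ 2) ≤ c ^ 2 * y ^ 2 := min_le_right _ _
        _ ≤ max 1 (c ^ 2) * y ^ 2 := by nlinarith [le_max_right 1 (c^2), sq_nonneg y]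
    · rw [min_eq_left h]
      calc min 1 (c ^ 2 * y ^ 2) ≤ 1 := min_le_left _ _
        _ ≤ max 1 (c ^ 2) * 1 := by rw [mul_one]; exact le_max_left _ _
  refine ne_top_of_le_ne_top ?_ (lintegral_mono hpt)
  rw [lintegral_const_mul' _ _ ENNReal.ofReal_ne_top]
  exact ENNReal.mul_ne_top ENNReal.ofReal_ne_top hνI

private lemma aux_log_term (ν : Measure ℝ)
    (hνI : ∫⁻ y : ℝ, ENNReal.ofReal (min 1 (y ^ 2)) ∂ν ≠ ⊤)
    (hlog : ∫⁻ y in {y : ℝ | 1 < |y|}, ENNReal.ofReal (Real.log |y|) ∂ν ≠ ⊤)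
    (c γ : ℝ) (hc : c ≠ 0) (hγ : 0 < γ) :
    ∫⁻ y : ℝ, ENNReal.ofReal (max 0 (Real.log (c ^ 2 * y ^ 2)) / (2 * γ)) ∂ν ≠ ⊤ := by
  have h2γ : (0:ℝ) < 2 * γ := by linarith
  set ε : ℝ := min 1 |c|⁻¹ with hε
  have hε0 : 0 < ε := lt_min one_pos (by positivity)
  have hε1 : ε ≤ 1 := min_le_left _ _
  set S : Set ℝ := {y : ℝ | ε < |y|} with hSdef
  have hS : MeasurableSet S := measurableSet_lt measurable_const (_root_.continuous_abs.measurable)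
  have hνS : ν S ≠ ⊤ := by
    have hb : ENNReal.ofReal (min 1 (ε ^ 2)) * ν S
        ≤ ∫⁻ y : ℝ, ENNReal.ofReal (min 1 (y ^ 2)) ∂ν := by
      rw [← setLIntegral_const S]
      refine le_trans (setLIntegral_mono' hS fun y hy => ?_) (setLIntegral_le_lintegral _ _)
      apply ENNReal.ofReal_le_ofReal
      have hy' : ε < |y| := hy
      have : ε ^ 2 ≤ y ^ 2 := by
        nlinarith [abs_nonneg y, sq_abs y]
      exact min_le_min le_rfl this
    intro hSt
    rw [hSt, ENNReal.mul_top (by positivity)] at hb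
    exact hνI (top_le_iff.mp hb)
  have hlogS : ∫⁻ y in S, ENNReal.ofReal (max 0 (Real.log |y|)) ∂ν ≠ ⊤ := by
    have hT : MeasurableSet {y : ℝ | 1 < |y|} :=
      measurableSet_lt measurable_const (_root_.continuous_abs.measurable)
    have hpt : ∀ y : ℝ, ENNReal.ofReal (max 0 (Real.log |y|))
        ≤ ({y : ℝ | 1 < |y|}).indicator (fun y => ENNReal.ofReal (Real.log |y|)) y := by
      intro y
      rcases le_or_gt (|y|) 1 with h | h
      · rw [max_eq_left (Real.log_nonpos (abs_nonneg y) h)]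
        simp
      · rw [Set.indicator_of_mem (by exact h) _,
          max_eq_right (Real.log_nonneg h.le)]
    refine ne_top_of_le_ne_top ?_
      ((setLIntegral_mono' hS fun y _ => hpt y).trans (setLIntegral_le_lintegral _ _))
    rw [lintegral_indicator hT]
    exact hlog
  have hpt : ∀ y : ℝ, ENNReal.ofReal (max 0 (Real.log (c ^ 2 * y ^ 2)) / (2 * γ))
      ≤ S.indicator (fun y => ENNReal.ofReal (max 0 (Real.log (c ^ 2)) / (2 * γ))
          + ENNReal.ofReal (1 / γ) * ENNReal.ofReal (max 0 (Real.log |y|))) y := by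
    intro y
    rcases le_or_gt (|y|) ε with h | h
    · have hle : c ^ 2 * y ^ 2 ≤ 1 := by
        have h2 : ε ≤ |c|⁻¹ := min_le_right _ _
        have h4 : |c| * ε ≤ 1 := by
          rw [← mul_inv_cancel₀ (abs_ne_zero.mpr hc)]
          exact mul_le_mul_of_nonneg_left h2 (abs_nonneg c)
        have h5 : c ^ 2 * y ^ 2 = (|c| * |y|) ^ 2 := by
          rw [mul_pow, sq_abs, sq_abs]
        have h6 : |c| * |y| ≤ 1 :=
          le_trans (by nlinarith [abs_nonneg c, abs_nonneg y, hε0.le]) h4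
        have h7 : (0:ℝ) ≤ |c| * |y| := by positivity
        nlinarith
      rw [max_eq_left (Real.log_nonpos (by positivity) hle), zero_div]
      simp
    · have hyS : y ∈ S := h
      rw [Set.indicator_of_mem hyS]
      have hy0 : y ≠ 0 := by
        intro h0; rw [h0, abs_zero] at h; exact absurd h (not_lt.mpr hε0.le)
      have hlogeq : Real.log (c ^ 2 * y ^ 2) = Real.log (c ^ 2) + 2 * Real.log |y| := by
        rw [Real.log_mul (by positivity) (by positivity),
          show (y:ℝ) ^ 2 = |y| ^ 2 from (sq_abs y).symm]
        simp only [Real.log_pow]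
        push_cast; ring
      have hmax : max 0 (Real.log (c ^ 2 * y ^ 2))
          ≤ max 0 (Real.log (c ^ 2)) + 2 * max 0 (Real.log |y|) := by
        rw [hlogeq]
        refine max_le (by positivity) ?_
        have h1 : Real.log (c ^ 2) ≤ max 0 (Real.log (c ^ 2)) := le_max_right _ _
        have h2 : Real.log |y| ≤ max 0 (Real.log |y|) := le_max_right _ _
        linarith
      calc ENNReal.ofReal (max 0 (Real.log (c ^ 2 * y ^ 2)) / (2 * γ))
          ≤ ENNReal.ofReal ((max 0 (Real.log (c ^ 2)) + 2 * max 0 (Real.log |y|)) / (2 * γ)) := by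
            apply ENNReal.ofReal_le_ofReal
            gcongr
        _ = ENNReal.ofReal (max 0 (Real.log (c ^ 2)) / (2 * γ)
              + (1 / γ) * max 0 (Real.log |y|)) := by
            congr 1; field_simp
        _ ≤ _ := by
            rw [ENNReal.ofReal_add (by positivity) (by positivity),
              ENNReal.ofReal_mul (by positivity)]
  refine ne_top_of_le_ne_top ?_ (lintegral_mono hpt)
  rw [lintegral_indicator hS, lintegral_add_left measurable_const,
    setLIntegral_const, lintegral_const_mul' _ _ ENNReal.ofReal_ne_top]
  exact ENNReal.add_ne_top.mpr ⟨ENNReal.mul_ne_top ENNReal.ofReal_ne_top hνS,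
    ENNReal.mul_ne_top ENNReal.ofReal_ne_top hlogS⟩

/-- Under the logarithmic moment condition, the Lévy exponent of the invariant law of the
one-dimensional Ornstein–Uhlenbeck process is finite:
`∫_0^∞ ∫_ℝ (1 − cos(e^{−γs} β h y)) dν ds < ∞` for every `h`. -/
theorem invariant_exponent_finite
    (ν : Measure ℝ) [SigmaFinite ν]
    (hν0 : ν {0} = 0)
    (hνI : ∫⁻ y : ℝ, ENNReal.ofReal (min 1 (y ^ 2)) ∂ν ≠ ⊤)
    (hlog : ∫⁻ y in {y : ℝ | 1 < |y|}, ENNReal.ofReal (Real.log |y|) ∂ν ≠ ⊤)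
    (β γ : ℝ) (hβ : 0 < β) (hγ : 0 < γ) :
    ∀ h : ℝ,
      ∫⁻ s in Set.Ioi (0 : ℝ),
          (∫⁻ y : ℝ, ENNReal.ofReal (1 - Real.cos (Real.exp (-γ * s) * β * h * y)) ∂ν)
        ≠ ⊤ := by
  intro h
  rcases eq_or_ne h 0 with rfl | hh
  · simp
  · set c : ℝ := β * h with hcdef
    have hc0 : c ≠ 0 := mul_ne_zero hβ.ne' hh
    set f : ℝ → ℝ → ℝ≥0∞ := fun s y =>
      ENNReal.ofReal (min 1 (Real.exp (-(2 * γ * s)) * (c ^ 2 * y ^ 2))) with hfdef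
    have hsq : ∀ s y : ℝ, (Real.exp (-γ * s) * β * h * y) ^ 2
        = Real.exp (-(2 * γ * s)) * (c ^ 2 * y ^ 2) := by
      intro s y
      rw [show Real.exp (-(2 * γ * s)) = Real.exp (-γ * s) * Real.exp (-γ * s) from by
        rw [← Real.exp_add]; ring_nf]
      rw [hcdef]; ring
    have hstepA : ∀ s y : ℝ,
        ENNReal.ofReal (1 - Real.cos (Real.exp (-γ * s) * β * h * y)) ≤ 2 * f s y := by
      intro s y
      calc ENNReal.ofReal (1 - Real.cos (Real.exp (-γ * s) * β * h * y))
          ≤ ENNReal.ofReal (2 * min 1 ((Real.exp (-γ * s) * β * h * y) ^ 2)) :=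
            ENNReal.ofReal_le_ofReal (aux_one_sub_cos _)
        _ = 2 * f s y := by
            rw [ENNReal.ofReal_mul (by norm_num : (0:ℝ) ≤ 2), hsq s y]
            norm_num [hfdef]
    have hmeas : AEMeasurable (Function.uncurry f)
        (((volume : Measure ℝ).restrict (Set.Ioi 0)).prod ν) := by
      rw [hfdef]
      fun_prop
    have hAmeas : Measurable
        (fun y : ℝ => ENNReal.ofReal (max 0 (Real.log (c ^ 2 * y ^ 2)) / (2 * γ))) :=
      ((measurable_const.max (Real.measurable_log.comp
        ((measurable_id.pow_const 2).const_mul (c ^ 2)))).div_const (2 * γ)).ennreal_ofReal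
    have hmain : (∫⁻ s in Set.Ioi (0 : ℝ),
          (∫⁻ y : ℝ, ENNReal.ofReal (1 - Real.cos (Real.exp (-γ * s) * β * h * y)) ∂ν))
        ≤ 2 * ((∫⁻ y : ℝ, ENNReal.ofReal (max 0 (Real.log (c ^ 2 * y ^ 2)) / (2 * γ)) ∂ν)
          + ∫⁻ y : ℝ, ENNReal.ofReal (min 1 (c ^ 2 * y ^ 2) / (2 * γ)) ∂ν) := by
      calc ∫⁻ s in Set.Ioi (0 : ℝ),
            (∫⁻ y : ℝ, ENNReal.ofReal (1 - Real.cos (Real.exp (-γ * s) * β * h * y)) ∂ν)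
          ≤ ∫⁻ s in Set.Ioi (0 : ℝ), (∫⁻ y : ℝ, 2 * f s y ∂ν) :=
            lintegral_mono fun s => lintegral_mono fun y => hstepA s y
        _ = 2 * ∫⁻ s in Set.Ioi (0 : ℝ), (∫⁻ y : ℝ, f s y ∂ν) := by
            simp_rw [lintegral_const_mul' 2 _ (by norm_num : (2:ℝ≥0∞) ≠ ⊤)]
        _ = 2 * ∫⁻ y : ℝ, (∫⁻ s in Set.Ioi (0 : ℝ), f s y) ∂ν := by
            rw [lintegral_lintegral_swap hmeas]
        _ ≤ 2 * ∫⁻ y : ℝ, (ENNReal.ofReal (max 0 (Real.log (c ^ 2 * y ^ 2)) / (2 * γ))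
              + ENNReal.ofReal (min 1 (c ^ 2 * y ^ 2) / (2 * γ))) ∂ν := by
            refine mul_le_mul_right (lintegral_mono fun y => ?_) 2
            exact aux_time_integral hγ (by positivity)
        _ = 2 * ((∫⁻ y : ℝ, ENNReal.ofReal (max 0 (Real.log (c ^ 2 * y ^ 2)) / (2 * γ)) ∂ν)
              + ∫⁻ y : ℝ, ENNReal.ofReal (min 1 (c ^ 2 * y ^ 2) / (2 * γ)) ∂ν) := by
            rw [lintegral_add_left hAmeas]
    refine ne_top_of_le_ne_top ?_ hmain
    exact ENNReal.mul_ne_top (by norm_num)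
      (ENNReal.add_ne_top.mpr ⟨aux_log_term ν hνI hlog c γ hc0 hγ,
        aux_min_term ν hνI c γ hγ⟩)
end
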